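/- arXiv:2402.14965 — 2 statements merged into one kernel-verified Lean document; each statement's English description precedes it below -/
import Mathlib

section
/- Let P be a rectangular polyomino whose only hole is an I-slit of size 2 (a straight slit of length 2). Then there is no surjective consistent mapping from P onto the surface C of the unit cube; consequently P does not fold onto C. -/
/-!
Common formal framework: polyominoes (as square complexes with possible slits),
their topological realisations, folded states, ambient isotopy, foldings onto the
surface of the unit cube, unlinks, and consistent mappings.
-/

open Classical
noncomputable section

namespace CubeFold

/-- Euclidean plane. -/
abbrev R2 := EuclideanSpace ℝ (Fin 2)
/-- Euclidean 3-space. -/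
abbrev R3 := EuclideanSpace ℝ (Fin 3)

/-- A cell (unit square) of the integer lattice, indexed by its lower-left corner. -/
abbrev Cell := ℤ × ℤ

/-- Two cells are adjacent if they share an edge of the lattice. -/
def cellAdj (c d : Cell) : Prop := (c.1 - d.1).natAbs + (c.2 - d.2).natAbs = 1

instance (c d : Cell) : Decidable (cellAdj c d) :=
  inferInstanceAs (Decidable ((c.1 - d.1).natAbs + (c.2 - d.2).natAbs = 1))

/-- A polyomino: a finite nonempty set of lattice cells, together with a symmetric set of
`joins` (pairs of adjacent cells glued along their common edge; adjacent cells that are not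
joined are separated by a slit), such that the whole figure is edge-connected.
Since the cells sit at given positions of the plane, such a polyomino automatically admits a
flat placement in which distinct faces overlap only in edges. -/
structure Polyomino where
  cells : Finset Cell
  nonempty : cells.Nonempty
  joins : Finset (Cell × Cell)
  joins_symm : ∀ e ∈ joins, (e.2, e.1) ∈ joins
  joins_mem : ∀ e ∈ joins, e.1 ∈ cells ∧ e.2 ∈ cells
  joins_adj : ∀ e ∈ joins, cellAdj e.1 e.2
  connected : ∀ c ∈ cells, ∀ d ∈ cells,
    Relation.ReflTransGen (fun a b => (a, b) ∈ joins) c d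

/-- The closed unit square in the plane. -/
def unitSq : Set R2 := {x | 0 ≤ x 0 ∧ x 0 ≤ 1 ∧ 0 ≤ x 1 ∧ x 1 ≤ 1}

def mk2 (a b : ℝ) : R2 := !₂[a, b]

/-- The point of the plane corresponding to local coordinates `x` inside cell `c`. -/
def cellPt (c : Cell) (x : R2) : R2 := mk2 ((c.1 : ℝ) + x 0) ((c.2 : ℝ) + x 1)

/-- Index space: disjoint union of the (closed) unit squares of the cells of `P`. -/
def PolyIdx (P : Polyomino) : Type := {c : Cell // c ∈ P.cells} × {x : R2 // x ∈ unitSq}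

instance (P : Polyomino) : TopologicalSpace (PolyIdx P) := by
  unfold PolyIdx; infer_instance

/-- Gluing relation: two points of (possibly different) cells are identified when they occupy
the same point of the plane and their cells are equal or joined. -/
def glueRel (P : Polyomino) : PolyIdx P → PolyIdx P → Prop := fun a b =>
  cellPt a.1.1 a.2.1 = cellPt b.1.1 b.2.1 ∧ (a.1.1 = b.1.1 ∨ (a.1.1, b.1.1) ∈ P.joins)

/-- The underlying topological space of the polyomino `P` (a square complex). -/
def PolySpace (P : Polyomino) : Type := Quot (glueRel P)

instance (P : Polyomino) : TopologicalSpace (PolySpace P) := by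
  unfold PolySpace; infer_instance

/-- The point of `PolySpace P` lying in cell `c` with local coordinates `x`. -/
def pt (P : Polyomino) (c : Cell) (hc : c ∈ P.cells) (x : R2) (hx : x ∈ unitSq) :
    PolySpace P :=
  Quot.mk (glueRel P) (⟨c, hc⟩, ⟨x, hx⟩)

/-- The canonical flat placement of `P` in the plane. -/
def flatMap (P : Polyomino) : PolySpace P → R2 :=
  Quot.lift (fun a => cellPt a.1.1 a.2.1) (fun _ _ h => h.1)

/-- A map `PolySpace P → R3` is piecewise linear if each cell can be covered by finitely
many convex pieces on each of which the map is affine. -/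
def IsPLMap (P : Polyomino) (F : PolySpace P → R3) : Prop :=
  ∀ (c : Cell) (hc : c ∈ P.cells), ∃ S : Finset (Finset R2),
    (∀ x ∈ unitSq, ∃ T ∈ S, x ∈ convexHull ℝ (T : Set R2)) ∧
    ∀ T ∈ S, ∃ g : R2 →ᵃ[ℝ] R3, ∀ x, ∀ hx : x ∈ unitSq,
      x ∈ convexHull ℝ (T : Set R2) → F (pt P c hc x hx) = g x

/-- A folded state of `P`: a piecewise linear topological embedding of `P` into `R3`. -/
structure FoldedState (P : Polyomino) where
  toFun : PolySpace P → R3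
  embedding : Topology.IsEmbedding toFun
  pl : IsPLMap P toFun

/-- A folding blueprint: a map whose restriction to each face of `P` is an isometry. -/
def IsBlueprint (P : Polyomino) (β : PolySpace P → R3) : Prop :=
  ∀ (c : Cell) (hc : c ∈ P.cells), ∀ (x y : R2) (hx : x ∈ unitSq) (hy : y ∈ unitSq),
    dist (β (pt P c hc x hx)) (β (pt P c hc y hy)) = dist x y

/-- A folded state `F` (ε-)corresponds to a blueprint `β` (with the fixed ε = 1/2). -/
def Corresponds (P : Polyomino) (F : FoldedState P) (β : PolySpace P → R3) : Prop :=
  ∀ p : PolySpace P, dist (F.toFun p) (β p) < 1 / 2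

/-- A flat folding blueprint: an isometric placement of the flat polyomino inside a plane
of `R3`. -/
def IsFlatBlueprint (P : Polyomino) (β : PolySpace P → R3) : Prop :=
  ∃ j : R2 → R3, Isometry j ∧ β = j ∘ flatMap P

/-- A trivial folding: a realisation of a flat folding blueprint. -/
def IsTrivialFolding (P : Polyomino) (F : FoldedState P) : Prop :=
  ∃ β : PolySpace P → R3, IsFlatBlueprint P β ∧ Corresponds P F β

/-- An ambient isotopy of `R3`: a continuous family of self-homeomorphisms starting at the
identity. -/
def IsAmbientIsotopy (H : ℝ → R3 → R3) : Prop :=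
  Continuous (fun q : ℝ × R3 => H q.1 q.2) ∧
  (∀ t : ℝ, ∃ h : R3 ≃ₜ R3, ∀ x, H t x = h x) ∧
  (∀ x, H 0 x = x)

/-- A folded state is valid (is a folding) if it is ambient isotopic to a trivial folding. -/
def ValidFolding (P : Polyomino) (F : FoldedState P) : Prop :=
  ∃ H : ℝ → R3 → R3, IsAmbientIsotopy H ∧
    ∃ G : FoldedState P, IsTrivialFolding P G ∧ ∀ p, H 1 (F.toFun p) = G.toFun p

/-- The surface of the unit cube in `R3`. -/
def cubeSurface : Set R3 :=
  {p | (∀ i, 0 ≤ p i ∧ p i ≤ 1) ∧ ∃ i, p i = 0 ∨ p i = 1}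

/-- The face of the unit cube with normal direction `i` at height `0` or `1`. -/
def cubeFace (i : Fin 3) (b : Bool) : Set R3 :=
  {p | (∀ j, 0 ≤ p j ∧ p j ≤ 1) ∧ p i = if b then 1 else 0}

/-- `P` folds onto the surface of the unit cube: some valid folding of `P` corresponds to a
surjective folding blueprint `β : P → C`. -/
def FoldsOntoCube (P : Polyomino) : Prop :=
  ∃ F : FoldedState P, ValidFolding P F ∧
    ∃ β : PolySpace P → R3, IsBlueprint P β ∧ Set.range β = cubeSurface ∧
      Corresponds P F β

/-- `n` disjoint round circles, side by side in a plane. -/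
def stdCircles (n : ℕ) : Set R3 :=
  {p | ∃ k : ℕ, k < n ∧ (p 0 - 3 * (k : ℝ)) ^ 2 + (p 1) ^ 2 = 1 ∧ p 2 = 0}

/-- A subset of `R3` is an unlink if some ambient isotopy carries it to a finite collection
of circles embedded side by side in a plane. -/
def IsUnlink (L : Set R3) : Prop :=
  ∃ (n : ℕ) (H : ℝ → R3 → R3), IsAmbientIsotopy H ∧ (fun x => H 1 x) '' L = stdCircles n

/-- The (topological) boundary of the polyomino surface: the set of points having no open
neighbourhood homeomorphic to the plane. -/
def polyBoundary (P : Polyomino) : Set (PolySpace P) :=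
  {p | ¬ ∃ U : Set (PolySpace P), IsOpen U ∧ p ∈ U ∧ Nonempty (U ≃ₜ R2)}

/-- A polyhedron in `R3`: a finite union of convex polytopes. -/
def IsPolyhedron (Q : Set R3) : Prop :=
  ∃ S : Finset (Finset R3), Q = ⋃ T ∈ S, convexHull ℝ (T : Set R3)

/-- A polyhedral sphere: a polyhedron homeomorphic to the 2-sphere. -/
def IsPolyhedralSphere (Q : Set R3) : Prop :=
  IsPolyhedron Q ∧ Nonempty (Q ≃ₜ Metric.sphere (0 : R3) 1)

/-! ### Consistent mappings to the combinatorial cube -/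

/-- The corner of cell `c` with local coordinates `k`. -/
def cornerPt (c : Cell) (k : Fin 2 × Fin 2) : ℤ × ℤ :=
  (c.1 + ((k.1 : ℕ) : ℤ), c.2 + ((k.2 : ℕ) : ℤ))

/-- Number of coordinates in which two vertices of the cube differ. -/
def vdiff (u v : Fin 3 → Bool) : ℕ := (Finset.univ.filter fun i => u i ≠ v i).card

/-- Number of coordinates in which two corners of a square differ. -/
def kdiff (k k' : Fin 2 × Fin 2) : ℕ :=
  (if k.1 = k'.1 then 0 else 1) + (if k.2 = k'.2 then 0 else 1)

/-- A consistent mapping from the polyomino `P` to the unit cube, viewed as a homomorphism of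
square complexes: cells are mapped to faces (`Fin 3 × Bool`: a normal direction together with a
side) and corners of cells to vertices of the cube (`Fin 3 → Bool`), so that each cell is mapped
isomorphically onto a face and identified corners of joined cells have equal images (hence edges
are mapped to edges and all incidences are preserved). -/
structure ConsMap (P : Polyomino) where
  cellMap : Cell → Fin 3 × Bool
  vertMap : Cell → Fin 2 × Fin 2 → (Fin 3 → Bool)
  vert_on_face : ∀ c ∈ P.cells, ∀ k, vertMap c k (cellMap c).1 = (cellMap c).2
  face_iso : ∀ c ∈ P.cells, ∀ k k', vdiff (vertMap c k) (vertMap c k') = kdiff k k'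
  join_compat : ∀ e ∈ P.joins, ∀ k k', cornerPt e.1 k = cornerPt e.2 k' →
    vertMap e.1 k = vertMap e.2 k'

/-- A consistent mapping is surjective if every face of the cube is the image of a cell. -/
def ConsMap.Surjective {P : Polyomino} (φ : ConsMap P) : Prop :=
  ∀ f : Fin 3 × Bool, ∃ c ∈ P.cells, φ.cellMap c = f

/-! ### Rectangular polyominoes, holes and slits -/

/-- The cells of the full `m × n` rectangle (`m` columns, `n` rows). -/
def rectCells (m n : ℕ) : Finset Cell := Finset.Icc (0, 0) ((m : ℤ) - 1, (n : ℤ) - 1)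

/-- All joins between adjacent cells of `S`. -/
def fullJoins (S : Finset Cell) : Finset (Cell × Cell) :=
  (S ×ˢ S).filter fun e => cellAdj e.1 e.2

/-- The two cells separated by the vertical lattice edge from `(p,q)` to `(p,q+1)`. -/
def vE (p q : ℤ) : Cell × Cell := ((p - 1, q), (p, q))

/-- The two cells separated by the horizontal lattice edge from `(p,q)` to `(p+1,q)`. -/
def hE (p q : ℤ) : Cell × Cell := ((p, q - 1), (p, q))

/-- Both orientations of a join. -/
def remPair (e : Cell × Cell) : Finset (Cell × Cell) := {e, (e.2, e.1)}

/-- A lattice vertex interior to the `m × n` rectangle. -/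
def intVert (m n : ℕ) (v : ℤ × ℤ) : Prop :=
  1 ≤ v.1 ∧ v.1 ≤ (m : ℤ) - 1 ∧ 1 ≤ v.2 ∧ v.2 ≤ (n : ℤ) - 1

/-- The four sides of the cell `c`, as pairs of separated cells:
left, right, bottom, top. -/
def cellSide (c : Cell) : Fin 4 → Cell × Cell :=
  ![vE c.1 c.2, vE (c.1 + 1) c.2, hE c.1 c.2, hE c.1 (c.2 + 1)]

/-- `P` is the full `m × n` rectangle with exactly the joins of `R` slit open. -/
def RectWithSlits (P : Polyomino) (m n : ℕ) (R : Finset (Cell × Cell)) : Prop :=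
  P.cells = rectCells m n ∧ P.joins = fullJoins (rectCells m n) \ R

/-- `P` is an `m × n` rectangle with a single unit square hole `h` (and no other holes). -/
def RectWithUnitHole (P : Polyomino) (m n : ℕ) (h : Cell) : Prop :=
  1 ≤ h.1 ∧ h.1 ≤ (m : ℤ) - 2 ∧ 1 ≤ h.2 ∧ h.2 ≤ (n : ℤ) - 2 ∧
  P.cells = (rectCells m n).erase h ∧ P.joins = fullJoins P.cells

/-- `P` is an `m × n` rectangle with a single slit of size 1 (and no other holes). -/
def RectWithSlit1 (P : Polyomino) (m n : ℕ) : Prop :=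
  ∃ p q : ℤ,
    (intVert m n (p, q) ∧ intVert m n (p, q + 1) ∧ RectWithSlits P m n (remPair (vE p q))) ∨
    (intVert m n (p, q) ∧ intVert m n (p + 1, q) ∧ RectWithSlits P m n (remPair (hE p q)))

/-- `P` is an `m × n` rectangle with a single I-slit of size 2 (and no other holes). -/
def RectWithISlit2 (P : Polyomino) (m n : ℕ) : Prop :=
  ∃ p q : ℤ,
    (intVert m n (p, q) ∧ intVert m n (p, q + 1) ∧ intVert m n (p, q + 2) ∧
      RectWithSlits P m n (remPair (vE p q) ∪ remPair (vE p (q + 1)))) ∨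
    (intVert m n (p, q) ∧ intVert m n (p + 1, q) ∧ intVert m n (p + 2, q) ∧
      RectWithSlits P m n (remPair (hE p q) ∪ remPair (hE (p + 1) q)))

/-- `P` is an `m × n` rectangle with a single L-slit of size 2 (and no other holes):
two perpendicular slit edges meeting at the interior vertex `(p,q)`. -/
def RectWithLSlit2 (P : Polyomino) (m n : ℕ) : Prop :=
  ∃ p q : ℤ, ∃ s t : Bool,
    intVert m n (p, q) ∧
    intVert m n (p, q + (if s then 1 else -1)) ∧
    intVert m n (p + (if t then 1 else -1), q) ∧
    RectWithSlits P m n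
      (remPair (vE p (if s then q else q - 1)) ∪ remPair (hE (if t then p else p - 1) q))

/-- `P` is an `m × n` rectangle with a single U-slit of size 3 (and no other holes):
three of the four sides of the cell `c` are slit open. -/
def RectWithUSlit3 (P : Polyomino) (m n : ℕ) : Prop :=
  ∃ c : Cell, ∃ k : Fin 4,
    intVert m n (c.1, c.2) ∧ intVert m n (c.1 + 1, c.2) ∧
    intVert m n (c.1, c.2 + 1) ∧ intVert m n (c.1 + 1, c.2 + 1) ∧
    RectWithSlits P m n ((Finset.univ.erase k).biUnion fun k' => remPair (cellSide c k'))

/-- `P` is an `m × n` rectangle whose holes are exactly the unit square holes `H`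
(all interior, pairwise non-touching) and no other holes. -/
def RectWithUnitHoles (P : Polyomino) (m n : ℕ) (H : Finset Cell) : Prop :=
  (∀ h ∈ H, 1 ≤ h.1 ∧ h.1 ≤ (m : ℤ) - 2 ∧ 1 ≤ h.2 ∧ h.2 ≤ (n : ℤ) - 2) ∧
  (∀ h ∈ H, ∀ h' ∈ H, h ≠ h' → 2 ≤ max (h.1 - h'.1).natAbs (h.2 - h'.2).natAbs) ∧
  P.cells = rectCells m n \ H ∧ P.joins = fullJoins P.cells

/-- Two unit square holes cooperate: they lie in the same or adjacent rows (resp. columns) and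
the number of columns (resp. rows) strictly between them is odd. -/
def Cooperate (h₁ h₂ : Cell) : Prop :=
  ((h₁.2 - h₂.2).natAbs ≤ 1 ∧ Odd ((h₁.1 - h₂.1).natAbs - 1)) ∨
  ((h₁.1 - h₂.1).natAbs ≤ 1 ∧ Odd ((h₁.2 - h₂.2).natAbs - 1))

/-- The images under a consistent mapping of the four boundary edges of a unit square hole `h`
(each edge given as the unordered pair of the images of its two endpoints):
the facing sides of the right, left, top and bottom neighbouring cell of `h`. -/
def holeSideEdge {P : Polyomino} (φ : ConsMap P) (h : Cell) : Fin 4 → Set (Fin 3 → Bool) :=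
  ![{φ.vertMap (h.1 + 1, h.2) (0, 0), φ.vertMap (h.1 + 1, h.2) (0, 1)},
    {φ.vertMap (h.1 - 1, h.2) (1, 0), φ.vertMap (h.1 - 1, h.2) (1, 1)},
    {φ.vertMap (h.1, h.2 + 1) (0, 0), φ.vertMap (h.1, h.2 + 1) (1, 0)},
    {φ.vertMap (h.1, h.2 - 1) (0, 1), φ.vertMap (h.1, h.2 - 1) (1, 1)}]

/-- A consistent mapping is good if for no unit square hole of `H` all four boundary edges of
the hole are mapped to a single edge of the cube. -/
def ConsMap.IsGood {P : Polyomino} (φ : ConsMap P) (H : Finset Cell) : Prop :=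
  ∀ h ∈ H, ¬ ∀ k k' : Fin 4, holeSideEdge φ h k = holeSideEdge φ h k'

/-! ### Tree-shaped polyominoes and bounding boxes -/

/-- A polyomino is tree-shaped if its dual graph is a tree; since it is connected by
definition, this amounts to having exactly `#cells - 1` (unordered) joins. -/
def TreeShaped (P : Polyomino) : Prop := P.joins.card = 2 * (P.cells.card - 1)

/-- `P` has bounding box with lower-left cell `(x0, y0)`, `w` columns and `h` rows. -/
def HasBoundingBox (P : Polyomino) (x0 y0 : ℤ) (w h : ℕ) : Prop :=
  (∀ c ∈ P.cells, x0 ≤ c.1 ∧ c.1 < x0 + w ∧ y0 ≤ c.2 ∧ c.2 < y0 + h) ∧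
  (∃ c ∈ P.cells, c.1 = x0) ∧ (∃ c ∈ P.cells, c.1 = x0 + w - 1) ∧
  (∃ c ∈ P.cells, c.2 = y0) ∧ (∃ c ∈ P.cells, c.2 = y0 + h - 1)

/-- Reachability in the dual graph of `P` avoiding the set `S` of cells. -/
def ReachAvoid (P : Polyomino) (S : Cell → Prop) : Cell → Cell → Prop :=
  Relation.ReflTransGen fun u v => (u, v) ∈ P.joins ∧ ¬ S u ∧ ¬ S v

/-- The cells of the polyomino `P_W`. -/
def pwCells : Finset Cell := {(1, 1), (2, 1), (3, 1), (3, 2), (4, 2), (4, 3), (4, 4)}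

/-- The eight signed-permutation symmetries of the lattice, composed with a translation. -/
def sym8 (s₁ s₂ sw : Bool) (t : Cell) (p : Cell) : Cell :=
  let q : Cell := if sw then (p.2, p.1) else p
  (t.1 + (if s₁ then -q.1 else q.1), t.2 + (if s₂ then -q.2 else q.2))

/-- `P` is congruent (up to rotation, reflection and translation) to the polyomino `P_W`. -/
def CongruentToPW (P : Polyomino) : Prop :=
  ∃ s₁ s₂ sw : Bool, ∃ t : Cell,
    P.cells.image (sym8 s₁ s₂ sw t) = pwCells ∧
    P.joins.image (fun e => (sym8 s₁ s₂ sw t e.1, sym8 s₁ s₂ sw t e.2)) = fullJoins pwCells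



/-! ### Auxiliary development -/

section Aux

/-- Flip one coordinate of a cube vertex. -/
def bflip (d : Fin 3) (u : Fin 3 → Bool) : Fin 3 → Bool := fun j => (u j).xor (decide (j = d))

lemma bL1 : ∀ u v : Fin 3 → Bool, vdiff u v = 1 → ∃ d, v = bflip d u := by decide

lemma bL2 : ∀ u : Fin 3 → Bool, ∀ d1 d2 e : Fin 3, d1 ≠ d2 →
    vdiff u (bflip e (bflip d1 u)) = 2 →
    vdiff (bflip d2 u) (bflip e (bflip d1 u)) = 1 → e = d2 := by decide

lemma bflip_inj : ∀ (w : Fin 3 → Bool) (a b : Fin 3), bflip a w = bflip b w → a = b := by decide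

lemma vdiff_self (u : Fin 3 → Bool) : vdiff u u = 0 := by simp [vdiff]

/-- The structure of the corner images of a single cell. -/
def CellOK {P : Polyomino} (φ : ConsMap P) (c : Cell) (d : Fin 3 × Fin 3) : Prop :=
  d.1 ≠ d.2 ∧ φ.vertMap c (1,0) = bflip d.1 (φ.vertMap c (0,0)) ∧
    φ.vertMap c (0,1) = bflip d.2 (φ.vertMap c (0,0)) ∧
    φ.vertMap c (1,1) = bflip d.2 (bflip d.1 (φ.vertMap c (0,0)))

lemma kdiff_a : kdiff ((0:Fin 2),(0:Fin 2)) ((1:Fin 2),(0:Fin 2)) = 1 := by decide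
lemma kdiff_b : kdiff ((0:Fin 2),(0:Fin 2)) ((0:Fin 2),(1:Fin 2)) = 1 := by decide
lemma kdiff_c : kdiff ((1:Fin 2),(0:Fin 2)) ((1:Fin 2),(1:Fin 2)) = 1 := by decide
lemma kdiff_d : kdiff ((1:Fin 2),(0:Fin 2)) ((0:Fin 2),(1:Fin 2)) = 2 := by decide
lemma kdiff_e : kdiff ((0:Fin 2),(0:Fin 2)) ((1:Fin 2),(1:Fin 2)) = 2 := by decide
lemma kdiff_f : kdiff ((0:Fin 2),(1:Fin 2)) ((1:Fin 2),(1:Fin 2)) = 1 := by decide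

lemma cell_structure {P : Polyomino} (φ : ConsMap P) (c : Cell)
    (h : ∀ k k', vdiff (φ.vertMap c k) (φ.vertMap c k') = kdiff k k') :
    ∃ d : Fin 3 × Fin 3, CellOK φ c d := by
  have h1 := h (0,0) (1,0); rw [kdiff_a] at h1
  have h2 := h (0,0) (0,1); rw [kdiff_b] at h2
  have h3 := h (1,0) (1,1); rw [kdiff_c] at h3
  obtain ⟨d1, hd1⟩ := bL1 _ _ h1
  obtain ⟨d2, hd2⟩ := bL1 _ _ h2
  obtain ⟨e, he⟩ := bL1 _ _ h3
  have hne : d1 ≠ d2 := by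
    rintro rfl
    have h4 := h (1,0) (0,1); rw [kdiff_d] at h4
    rw [hd1, hd2] at h4
    simp [vdiff_self] at h4
  have he2 : e = d2 := by
    refine bL2 (φ.vertMap c (0,0)) d1 d2 e hne ?_ ?_
    · have h5 := h (0,0) (1,1); rw [kdiff_e] at h5
      rw [he, hd1] at h5
      exact h5
    · have h6 := h (0,1) (1,1); rw [kdiff_f] at h6
      rw [he, hd1, hd2] at h6
      exact h6
  exact ⟨(d1, d2), hne, hd1, hd2, by rw [he, hd1, he2]⟩

/-- The directions (of the bottom and left edge respectively) of a cell. -/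
noncomputable def dirsOf {P : Polyomino} (φ : ConsMap P) (c : Cell) : Fin 3 × Fin 3 :=
  if h : ∃ d, CellOK φ c d then h.choose else (0,1)

lemma dirsOf_spec {P : Polyomino} (φ : ConsMap P) {c : Cell} (hc : c ∈ P.cells) :
    CellOK φ c (dirsOf φ c) := by
  have h : ∃ d, CellOK φ c d := cell_structure φ c (φ.face_iso c hc)
  rw [dirsOf, dif_pos h]
  exact h.choose_spec

lemma cellMap_fst_ne {P : Polyomino} (φ : ConsMap P) {c : Cell} (hc : c ∈ P.cells) :
    (φ.cellMap c).1 ≠ (dirsOf φ c).1 ∧ (φ.cellMap c).1 ≠ (dirsOf φ c).2 := by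
  obtain ⟨hne, h10, h01, h11⟩ := dirsOf_spec φ hc
  have a := φ.vert_on_face c hc (0,0)
  constructor
  · intro hEq
    have b := φ.vert_on_face c hc (1,0)
    rw [h10] at b
    rw [← hEq] at b
    simp only [bflip] at b
    simp only [Prod.mk_zero_zero] at a b
    simp [a] at b
  · intro hEq
    have b := φ.vert_on_face c hc (0,1)
    rw [h01] at b
    rw [← hEq] at b
    simp only [bflip] at b
    simp only [Prod.mk_zero_zero] at a b
    simp [a] at b

lemma corner_cast (c : Cell) (k : Fin 2 × Fin 2) :
    cornerPt c k = (c.1 + ((k.1 : ℕ) : ℤ), c.2 + ((k.2 : ℕ) : ℤ)) := rfl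

lemma joinH_vert {P : Polyomino} (φ : ConsMap P) {x y : ℤ}
    (hj : ((x,y),(x+1,y)) ∈ P.joins) :
    φ.vertMap (x,y) (1,0) = φ.vertMap (x+1,y) (0,0) ∧
    φ.vertMap (x,y) (1,1) = φ.vertMap (x+1,y) (0,1) := by
  constructor
  · exact φ.join_compat _ hj (1,0) (0,0) (by simp [cornerPt])
  · exact φ.join_compat _ hj (1,1) (0,1) (by simp [cornerPt])

lemma joinV_vert {P : Polyomino} (φ : ConsMap P) {x y : ℤ}
    (hj : ((x,y),(x,y+1)) ∈ P.joins) :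
    φ.vertMap (x,y) (0,1) = φ.vertMap (x,y+1) (0,0) ∧
    φ.vertMap (x,y) (1,1) = φ.vertMap (x,y+1) (1,0) := by
  constructor
  · exact φ.join_compat _ hj (0,1) (0,0) (by simp [cornerPt])
  · exact φ.join_compat _ hj (1,1) (1,0) (by simp [cornerPt])

lemma bflip_comm : ∀ (w : Fin 3 → Bool) (a b : Fin 3),
    bflip a (bflip b w) = bflip b (bflip a w) := by decide

lemma joinH_dV {P : Polyomino} (φ : ConsMap P) {x y : ℤ}
    (hc : ((x,y) : Cell) ∈ P.cells) (hc' : ((x+1,y) : Cell) ∈ P.cells)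
    (hj : ((x,y),(x+1,y)) ∈ P.joins) :
    (dirsOf φ (x,y)).2 = (dirsOf φ (x+1,y)).2 := by
  obtain ⟨hne, h10, h01, h11⟩ := dirsOf_spec φ hc
  obtain ⟨hne', h10', h01', h11'⟩ := dirsOf_spec φ hc'
  obtain ⟨e1, e2⟩ := joinH_vert φ hj
  have k1 : φ.vertMap (x,y) (1,1) = bflip (dirsOf φ (x,y)).2 (φ.vertMap (x,y) (1,0)) := by
    rw [h11, h10]
  rw [e1, e2, h01'] at k1
  exact (bflip_inj _ _ _ k1.symm)

lemma joinV_dH {P : Polyomino} (φ : ConsMap P) {x y : ℤ}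
    (hc : ((x,y) : Cell) ∈ P.cells) (hc' : ((x,y+1) : Cell) ∈ P.cells)
    (hj : ((x,y),(x,y+1)) ∈ P.joins) :
    (dirsOf φ (x,y)).1 = (dirsOf φ (x,y+1)).1 := by
  obtain ⟨hne, h10, h01, h11⟩ := dirsOf_spec φ hc
  obtain ⟨hne', h10', h01', h11'⟩ := dirsOf_spec φ hc'
  obtain ⟨e1, e2⟩ := joinV_vert φ hj
  have k1 : φ.vertMap (x,y) (1,1) = bflip (dirsOf φ (x,y)).1 (φ.vertMap (x,y) (0,1)) := by
    rw [h11, h01, bflip_comm]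
  rw [e1, e2, h10'] at k1
  exact (bflip_inj _ _ _ k1.symm)

end Aux

section Main

lemma pig1 : ∀ a b c d : Fin 3, c ≠ d → a ≠ c → a ≠ d → b ≠ c → b ≠ d → a = b := by decide

lemma pig2 : ∀ a b : Fin 3, a ≠ b →
    ∃ g : Fin 3, g ≠ a ∧ g ≠ b ∧ ∀ j : Fin 3, j ≠ a → j ≠ b → j = g := by decide

set_option maxHeartbeats 3000000 in
lemma no_surj_vertical (P : Polyomino) (m n : ℕ) (p q : ℤ)
    (hp1 : 1 ≤ p) (hp2 : p ≤ (m:ℤ) - 1) (hq1 : 1 ≤ q) (hq2 : q + 2 ≤ (n:ℤ) - 1)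
    (hcells : P.cells = rectCells m n)
    (hjoins : P.joins = fullJoins (rectCells m n) \ (remPair (vE p q) ∪ remPair (vE p (q+1))))
    (φ : ConsMap P) (hsurj : φ.Surjective) : False := by
  have hmem : ∀ x y : ℤ, 0 ≤ x → x ≤ (m:ℤ)-1 → 0 ≤ y → y ≤ (n:ℤ)-1 →
      ((x,y) : Cell) ∈ P.cells := by
    intro x y h1 h2 h3 h4
    rw [hcells]
    simp only [rectCells, Finset.mem_Icc, Prod.le_def]
    refine ⟨⟨?_, ?_⟩, ?_, ?_⟩ <;> omega
  have hmemrev : ∀ c ∈ P.cells, 0 ≤ c.1 ∧ c.1 ≤ (m:ℤ)-1 ∧ 0 ≤ c.2 ∧ c.2 ≤ (n:ℤ)-1 := by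
    intro c hc
    rw [hcells] at hc
    simp only [rectCells, Finset.mem_Icc, Prod.le_def] at hc
    obtain ⟨⟨u1, u2⟩, u3, u4⟩ := hc
    exact ⟨u1, u3, u2, u4⟩
  have hvj : ∀ x y : ℤ, 0 ≤ x → x ≤ (m:ℤ)-1 → 0 ≤ y → y + 1 ≤ (n:ℤ)-1 →
      (((x,y) : Cell), ((x,y+1) : Cell)) ∈ P.joins := by
    intro x y h1 h2 h3 h4
    rw [hjoins, Finset.mem_sdiff]
    constructor
    · rw [fullJoins, Finset.mem_filter, Finset.mem_product]
      refine ⟨⟨?_, ?_⟩, ?_⟩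
      · rw [← hcells]; exact hmem x y h1 h2 h3 (by omega)
      · rw [← hcells]; exact hmem x (y+1) h1 h2 (by omega) h4
      · simp only [cellAdj]; omega
    · simp only [Finset.mem_union, remPair, vE, Finset.mem_insert, Finset.mem_singleton,
        Prod.mk.injEq, not_or]
      omega
  have hhj : ∀ x y : ℤ, 0 ≤ x → x + 1 ≤ (m:ℤ)-1 → 0 ≤ y → y ≤ (n:ℤ)-1 →
      (x + 1 ≠ p ∨ (y ≠ q ∧ y ≠ q + 1)) →
      (((x,y) : Cell), ((x+1,y) : Cell)) ∈ P.joins := by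
    intro x y h1 h2 h3 h4 h5
    rw [hjoins, Finset.mem_sdiff]
    constructor
    · rw [fullJoins, Finset.mem_filter, Finset.mem_product]
      refine ⟨⟨?_, ?_⟩, ?_⟩
      · rw [← hcells]; exact hmem x y h1 (by omega) h3 h4
      · rw [← hcells]; exact hmem (x+1) y (by omega) h2 h3 h4
      · simp only [cellAdj]; omega
    · simp only [Finset.mem_union, remPair, vE, Finset.mem_insert, Finset.mem_singleton,
        Prod.mk.injEq, not_or]
      omega
  have hcolH : ∀ x y1 y2 : ℤ, 0 ≤ x → x ≤ (m:ℤ)-1 → 0 ≤ y1 → y1 ≤ y2 → y2 ≤ (n:ℤ)-1 →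
      (dirsOf φ (x,y1)).1 = (dirsOf φ (x,y2)).1 := by
    intro x y1 y2 hx1 hx2 hy1 hy12 hy2
    refine Int.le_induction
      (motive := fun t _ => t ≤ (n:ℤ)-1 → (dirsOf φ (x,y1)).1 = (dirsOf φ (x,t)).1) ?_ ?_ y2 hy12 hy2
    · intro _; rfl
    · intro t ht ih hb
      rw [ih (by omega)]
      exact joinV_dH φ (hmem x t hx1 hx2 (by omega) (by omega))
        (hmem x (t+1) hx1 hx2 (by omega) (by omega)) (hvj x t hx1 hx2 (by omega) (by omega))
  have hrowV : ∀ y : ℤ, 0 ≤ y → y ≤ (n:ℤ)-1 → ∀ x1 x2 : ℤ, 0 ≤ x1 → x1 ≤ x2 → x2 ≤ (m:ℤ)-1 →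
      ((y ≠ q ∧ y ≠ q + 1) ∨ x2 ≤ p - 1 ∨ p ≤ x1) →
      (dirsOf φ (x1,y)).2 = (dirsOf φ (x2,y)).2 := by
    intro y hy1 hy2 x1 x2 hx1 hle hx2 hcond
    refine Int.le_induction
      (motive := fun t _ => t ≤ (m:ℤ)-1 → ((y ≠ q ∧ y ≠ q + 1) ∨ t ≤ p - 1 ∨ p ≤ x1) →
        (dirsOf φ (x1,y)).2 = (dirsOf φ (t,y)).2) ?_ ?_ x2 hle hx2 hcond
    · intro _ _; rfl
    · intro t ht ih hb hcond'
      have hcond'' : (y ≠ q ∧ y ≠ q + 1) ∨ t ≤ p - 1 ∨ p ≤ x1 := by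
        rcases hcond' with h | h | h
        · exact Or.inl h
        · exact Or.inr (Or.inl (by omega))
        · exact Or.inr (Or.inr h)
      rw [ih (by omega) hcond'']
      refine joinH_dV φ (hmem t y (by omega) (by omega) hy1 hy2)
        (hmem (t+1) y (by omega) (by omega) hy1 hy2) (hhj t y (by omega) (by omega) hy1 hy2 ?_)
      rcases hcond' with h | h | h
      · exact Or.inr h
      · exact Or.inl (by omega)
      · exact Or.inl (by omega)
  have hrowVany : ∀ y : ℤ, 0 ≤ y → y ≤ (n:ℤ)-1 → ∀ x1 x2 : ℤ,
      0 ≤ x1 → x1 ≤ (m:ℤ)-1 → 0 ≤ x2 → x2 ≤ (m:ℤ)-1 →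
      ((y ≠ q ∧ y ≠ q + 1) ∨ (x1 ≤ p - 1 ∧ x2 ≤ p - 1) ∨ (p ≤ x1 ∧ p ≤ x2)) →
      (dirsOf φ (x1,y)).2 = (dirsOf φ (x2,y)).2 := by
    intro y hy1 hy2 x1 x2 ha1 ha2 hb1 hb2 hcond
    rcases le_total x1 x2 with h | h
    · refine hrowV y hy1 hy2 x1 x2 ha1 h hb2 ?_
      rcases hcond with hc | hc | hc
      exacts [Or.inl hc, Or.inr (Or.inl hc.2), Or.inr (Or.inr hc.1)]
    · refine (hrowV y hy1 hy2 x2 x1 hb1 h ha2 ?_).symm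
      rcases hcond with hc | hc | hc
      exacts [Or.inl hc, Or.inr (Or.inl hc.1), Or.inr (Or.inr hc.2)]
  have hstepV : ∀ x y : ℤ, 0 ≤ x → x ≤ (m:ℤ)-1 → 0 ≤ y → y + 1 ≤ (n:ℤ)-1 → ∀ j : Fin 3,
      φ.vertMap (x,y+1) (0,0) j
        = ((φ.vertMap (x,y) (0,0) j).xor (decide (j = (dirsOf φ (x,y)).2))) := by
    intro x y h1 h2 h3 h4 j
    have hj := hvj x y h1 h2 h3 h4
    have e := (joinV_vert φ hj).1
    rw [← e]
    rw [(dirsOf_spec φ (hmem x y h1 h2 h3 (by omega))).2.2.1]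
    rfl
  have hstepH : ∀ x y : ℤ, 0 ≤ x → x + 1 ≤ (m:ℤ)-1 → 0 ≤ y → y ≤ (n:ℤ)-1 →
      (x + 1 ≠ p ∨ (y ≠ q ∧ y ≠ q + 1)) → ∀ j : Fin 3,
      φ.vertMap (x+1,y) (0,0) j
        = ((φ.vertMap (x,y) (0,0) j).xor (decide (j = (dirsOf φ (x,y)).1))) := by
    intro x y h1 h2 h3 h4 h5 j
    have hj := hhj x y h1 h2 h3 h4 h5
    have e := (joinH_vert φ hj).1
    rw [← e]
    rw [(dirsOf_spec φ (hmem x y h1 (by omega) h3 h4)).2.1]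
    rfl
  by_cases hA : ∀ x1 y1 x2 y2 : ℤ, 0 ≤ x1 → x1 ≤ (m:ℤ)-1 → 0 ≤ y1 → y1 ≤ (n:ℤ)-1 →
      0 ≤ x2 → x2 ≤ (m:ℤ)-1 → 0 ≤ y2 → y2 ≤ (n:ℤ)-1 →
      (dirsOf φ (x1,y1)).1 = (dirsOf φ (x2,y2)).1
  · obtain ⟨c, hc, hcm⟩ := hsurj ((dirsOf φ (((0:ℤ)),(0:ℤ))).1, true)
    obtain ⟨hb1, hb2, hb3, hb4⟩ := hmemrev c hc
    refine (cellMap_fst_ne φ hc).1 ?_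
    have h2 := hA 0 0 c.1 c.2 le_rfl (by omega) le_rfl (by omega) hb1 hb2 hb3 hb4
    rw [hcm]
    simpa using h2
  · push_neg at hA
    obtain ⟨x1, y1, x2, y2, hx11, hx12, hy11, hy12, hx21, hx22, hy21, hy22, hne0⟩ := hA
    have ha12 : (dirsOf φ (x1,(0:ℤ))).1 ≠ (dirsOf φ (x2,(0:ℤ))).1 := by
      intro h
      apply hne0
      rw [← hcolH x1 0 y1 hx11 hx12 le_rfl hy11 hy12,
          ← hcolH x2 0 y2 hx21 hx22 le_rfl hy21 hy22, h]
    obtain ⟨β, hβ1, hβ2, hβu⟩ := pig2 _ _ ha12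
    have hd2row : ∀ y : ℤ, 0 ≤ y → y ≤ (n:ℤ)-1 → y ≠ q → y ≠ q + 1 →
        ∀ x : ℤ, 0 ≤ x → x ≤ (m:ℤ)-1 → (dirsOf φ (x,y)).2 = β := by
      intro y hy1 hy2 hyq hyq1 x hx1 hx2
      have e1 : (dirsOf φ (x,y)).2 = (dirsOf φ (x1,y)).2 :=
        hrowVany y hy1 hy2 x x1 hx1 hx2 hx11 hx12 (Or.inl ⟨hyq, hyq1⟩)
      have e2 : (dirsOf φ (x,y)).2 = (dirsOf φ (x2,y)).2 :=
        hrowVany y hy1 hy2 x x2 hx1 hx2 hx21 hx22 (Or.inl ⟨hyq, hyq1⟩)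
      refine hβu _ ?_ ?_
      · rw [e1, hcolH x1 0 y hx11 hx12 le_rfl hy1 hy2]
        exact fun h => (dirsOf_spec φ (hmem x1 y hx11 hx12 hy1 hy2)).1 h.symm
      · rw [e2, hcolH x2 0 y hx21 hx22 le_rfl hy1 hy2]
        exact fun h => (dirsOf_spec φ (hmem x2 y hx21 hx22 hy1 hy2)).1 h.symm
    have hd1ne : ∀ x y : ℤ, 0 ≤ x → x ≤ (m:ℤ)-1 → 0 ≤ y → y ≤ (n:ℤ)-1 →
        (dirsOf φ (x,y)).1 ≠ β := by
      intro x y hx1 hx2 hy1 hy2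
      rw [← hcolH x 0 y hx1 hx2 le_rfl hy1 hy2]
      rw [← hd2row 0 (by omega) (by omega) (by omega) (by omega) x hx1 hx2]
      exact (dirsOf_spec φ (hmem x 0 hx1 hx2 (by omega) (by omega))).1
    have hSrow : ∀ y : ℤ, 0 ≤ y → y ≤ (n:ℤ)-1 → y ≠ q → y ≠ q + 1 →
        ∀ x1' x2' : ℤ, 0 ≤ x1' → x1' ≤ x2' → x2' ≤ (m:ℤ)-1 →
        φ.vertMap (x1',y) (0,0) β = φ.vertMap (x2',y) (0,0) β := by
      intro y hy1 hy2 hyq hyq1 x1' x2' hx1 hle hx2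
      refine Int.le_induction
        (motive := fun t _ => t ≤ (m:ℤ)-1 → φ.vertMap (x1',y) (0,0) β = φ.vertMap (t,y) (0,0) β)
        ?_ ?_ x2' hle hx2
      · intro _; rfl
      · intro t ht ih hb
        rw [ih (by omega)]
        rw [hstepH t y (by omega) (by omega) hy1 hy2 (Or.inr ⟨hyq, hyq1⟩) β]
        rw [decide_eq_false (fun h => hd1ne t y (by omega) (by omega) hy1 hy2 h.symm)]
        rw [Bool.xor_false]
    have hSrowany : ∀ y : ℤ, 0 ≤ y → y ≤ (n:ℤ)-1 → y ≠ q → y ≠ q + 1 →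
        ∀ x1' x2' : ℤ, 0 ≤ x1' → x1' ≤ (m:ℤ)-1 → 0 ≤ x2' → x2' ≤ (m:ℤ)-1 →
        φ.vertMap (x1',y) (0,0) β = φ.vertMap (x2',y) (0,0) β := by
      intro y hy1 hy2 hyq hyq1 x1' x2' ha1 ha2 hb1 hb2
      rcases le_total x1' x2' with h | h
      · exact hSrow y hy1 hy2 hyq hyq1 x1' x2' ha1 h hb2
      · exact (hSrow y hy1 hy2 hyq hyq1 x2' x1' hb1 h ha2).symm
    have hSq : ∀ x : ℤ, 0 ≤ x → x ≤ (m:ℤ)-1 →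
        φ.vertMap (x,q) (0,0) β = !(φ.vertMap ((0:ℤ),q-1) (0,0) β) := by
      intro x hx1 hx2
      have h1 := hstepV x (q-1) hx1 hx2 (by omega) (by omega) β
      rw [show q - 1 + 1 = q by ring] at h1
      have h2 : (dirsOf φ (x,q-1)).2 = β :=
        hd2row (q-1) (by omega) (by omega) (by omega) (by omega) x hx1 hx2
      rw [h1, h2, decide_eq_true rfl, Bool.xor_true]
      rw [hSrowany (q-1) (by omega) (by omega) (by omega) (by omega) x 0 hx1 hx2 (by omega)
        (by omega)]
    have hSq2 : ∀ x : ℤ, 0 ≤ x → x ≤ (m:ℤ)-1 →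
        φ.vertMap ((0:ℤ),q+2) (0,0) β
          = ((φ.vertMap (x,q+1) (0,0) β).xor (decide (β = (dirsOf φ (x,q+1)).2))) := by
      intro x hx1 hx2
      have h1 := hstepV x (q+1) hx1 hx2 (by omega) (by omega) β
      rw [show q + 1 + 1 = q + 2 by ring] at h1
      rw [hSrowany (q+2) (by omega) (by omega) (by omega) (by omega) 0 x (by omega) (by omega)
        hx1 hx2]
      exact h1
    have hstar : ∀ j : Fin 3,
        ((φ.vertMap ((p-1:ℤ),q) (1,0) j).xor (decide (j = (dirsOf φ ((p-1:ℤ),q)).2))).xor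
            (decide (j = (dirsOf φ ((p-1:ℤ),q+1)).2)) =
        ((φ.vertMap ((p-1:ℤ),q) (1,0) j).xor (decide (j = (dirsOf φ ((p:ℤ),q)).2))).xor
            (decide (j = (dirsOf φ ((p:ℤ),q+1)).2)) := by
      have sA := dirsOf_spec φ (hmem (p-1) q (by omega) (by omega) (by omega) (by omega))
      have sB := dirsOf_spec φ (hmem (p-1) (q+1) (by omega) (by omega) (by omega) (by omega))
      have sC := dirsOf_spec φ (hmem p q (by omega) (by omega) (by omega) (by omega))
      have sD := dirsOf_spec φ (hmem p (q+1) (by omega) (by omega) (by omega) (by omega))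
      have A1 : φ.vertMap ((p-1:ℤ),q) (1,1)
          = bflip (dirsOf φ ((p-1:ℤ),q)).2 (φ.vertMap ((p-1:ℤ),q) (1,0)) := by
        rw [sA.2.2.2, sA.2.1]
      have A2 : φ.vertMap ((p-1:ℤ),q+1) (1,0) = φ.vertMap ((p-1:ℤ),q) (1,1) :=
        ((joinV_vert φ (hvj (p-1) q (by omega) (by omega) (by omega) (by omega))).2).symm
      have A3 : φ.vertMap ((p-1:ℤ),q+1) (1,1)
          = bflip (dirsOf φ ((p-1:ℤ),q+1)).2 (φ.vertMap ((p-1:ℤ),q+1) (1,0)) := by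
        rw [sB.2.2.2, sB.2.1]
      have b1 := (joinV_vert φ (hvj (p-1) (q-1) (by omega) (by omega) (by omega) (by omega))).2
      rw [show q - 1 + 1 = q by ring] at b1
      have b2 := (joinH_vert φ (hhj (p-1) (q-1) (by omega) (by omega) (by omega) (by omega)
        (Or.inr ⟨by omega, by omega⟩))).2
      rw [show p - 1 + 1 = p by ring] at b2
      have b3 := (joinV_vert φ (hvj p (q-1) (by omega) (by omega) (by omega) (by omega))).1
      rw [show q - 1 + 1 = q by ring] at b3
      have B0 : φ.vertMap ((p:ℤ),q) (0,0) = φ.vertMap ((p-1:ℤ),q) (1,0) := by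
        rw [← b3, ← b2, b1]
      have B2 : φ.vertMap ((p:ℤ),q) (0,1)
          = bflip (dirsOf φ ((p:ℤ),q)).2 (φ.vertMap ((p:ℤ),q) (0,0)) := sC.2.2.1
      have B3 : φ.vertMap ((p:ℤ),q+1) (0,0) = φ.vertMap ((p:ℤ),q) (0,1) :=
        ((joinV_vert φ (hvj p q (by omega) (by omega) (by omega) (by omega))).1).symm
      have B4 : φ.vertMap ((p:ℤ),q+1) (0,1)
          = bflip (dirsOf φ ((p:ℤ),q+1)).2 (φ.vertMap ((p:ℤ),q+1) (0,0)) := sD.2.2.1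
      have t1 := (joinV_vert φ (hvj (p-1) (q+1) (by omega) (by omega) (by omega) (by omega))).2
      rw [show q + 1 + 1 = q + 2 by ring] at t1
      have t2 := (joinH_vert φ (hhj (p-1) (q+2) (by omega) (by omega) (by omega) (by omega)
        (Or.inr ⟨by omega, by omega⟩))).1
      rw [show p - 1 + 1 = p by ring] at t2
      have t3 := (joinV_vert φ (hvj p (q+1) (by omega) (by omega) (by omega) (by omega))).1
      rw [show q + 1 + 1 = q + 2 by ring] at t3
      have E : φ.vertMap ((p-1:ℤ),q+1) (1,1) = φ.vertMap ((p:ℤ),q+1) (0,1) := by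
        rw [t1, t2, ← t3]
      intro j
      have L : ((φ.vertMap ((p-1:ℤ),q) (1,0) j).xor
            (decide (j = (dirsOf φ ((p-1:ℤ),q)).2))).xor
            (decide (j = (dirsOf φ ((p-1:ℤ),q+1)).2))
          = φ.vertMap ((p-1:ℤ),q+1) (1,1) j := by
        rw [A3, A2, A1]; rfl
      have R : ((φ.vertMap ((p-1:ℤ),q) (1,0) j).xor
            (decide (j = (dirsOf φ ((p:ℤ),q)).2))).xor
            (decide (j = (dirsOf φ ((p:ℤ),q+1)).2))
          = φ.vertMap ((p:ℤ),q+1) (0,1) j := by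
        rw [B4, B3, B2, B0]; rfl
      rw [L, R, E]
    have key : ∀ xA xB : ℤ, 0 ≤ xA → xA ≤ (m:ℤ)-1 → 0 ≤ xB → xB ≤ (m:ℤ)-1 →
        (dirsOf φ (xA,q)).2 ≠ β → (dirsOf φ (xA,q+1)).2 = β →
        (dirsOf φ (xB,q)).2 = β → (dirsOf φ (xB,q+1)).2 ≠ β → False := by
      intro xA xB h1 h2 h3 h4 hA1 hA2 hB1 hB2
      have hsides : (xA ≤ p-1 ∧ p ≤ xB) ∨ (xB ≤ p-1 ∧ p ≤ xA) := by
        by_contra hcon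
        have hsame : (xA ≤ p-1 ∧ xB ≤ p-1) ∨ (p ≤ xA ∧ p ≤ xB) := by omega
        have heq : (dirsOf φ (xA,q)).2 = (dirsOf φ (xB,q)).2 := by
          refine hrowVany q (by omega) (by omega) xA xB h1 h2 h3 h4 ?_
          rcases hsame with h | h
          · exact Or.inr (Or.inl h)
          · exact Or.inr (Or.inr h)
        rw [hB1] at heq
        exact hA1 heq
      -- in both cases we derive that all columns avoid both δ and β, contradiction
      have hfin : ∀ dd : Fin 3, dd ≠ β →
          (∀ x : ℤ, 0 ≤ x → x ≤ (m:ℤ)-1 →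
            (dirsOf φ (x,q)).2 = dd ∨ (dirsOf φ (x,q+1)).2 = dd) →
          (∀ x : ℤ, 0 ≤ x → x ≤ (m:ℤ)-1 →
            (dirsOf φ (x,q)).2 = β ∨ (dirsOf φ (x,q+1)).2 = β) → False := by
        intro dd hddβ hall1 hall2
        have hax : ∀ x : ℤ, 0 ≤ x → x ≤ (m:ℤ)-1 →
            (dirsOf φ (x,(0:ℤ))).1 ≠ dd ∧ (dirsOf φ (x,(0:ℤ))).1 ≠ β := by
          intro x hx1 hx2
          have g1 : (dirsOf φ (x,(0:ℤ))).1 = (dirsOf φ (x,q)).1 :=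
            hcolH x 0 q hx1 hx2 le_rfl (by omega) (by omega)
          have g2 : (dirsOf φ (x,(0:ℤ))).1 = (dirsOf φ (x,q+1)).1 :=
            hcolH x 0 (q+1) hx1 hx2 le_rfl (by omega) (by omega)
          have ne1 := (dirsOf_spec φ (hmem x q hx1 hx2 (by omega) (by omega))).1
          have ne2 := (dirsOf_spec φ (hmem x (q+1) hx1 hx2 (by omega) (by omega))).1
          constructor
          · rcases hall1 x hx1 hx2 with h | h
            · rw [g1, ← h]; exact ne1
            · rw [g2, ← h]; exact ne2
          · rcases hall2 x hx1 hx2 with h | h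
            · rw [g1, ← h]; exact ne1
            · rw [g2, ← h]; exact ne2
        obtain ⟨u1, u2⟩ := hax x1 hx11 hx12
        obtain ⟨v1, v2⟩ := hax x2 hx21 hx22
        exact ha12 (pig1 _ _ dd β hddβ u1 u2 v1 v2)
      rcases hsides with ⟨hL, hR⟩ | ⟨hL, hR⟩
      · have e1 : (dirsOf φ ((p-1:ℤ),q)).2 = (dirsOf φ (xA,q)).2 :=
          hrowVany q (by omega) (by omega) (p-1) xA (by omega) (by omega) h1 h2
            (Or.inr (Or.inl ⟨by omega, hL⟩))
        have e2 : (dirsOf φ ((p-1:ℤ),q+1)).2 = β := by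
          rw [hrowVany (q+1) (by omega) (by omega) (p-1) xA (by omega) (by omega) h1 h2
            (Or.inr (Or.inl ⟨by omega, hL⟩)), hA2]
        have e3 : (dirsOf φ ((p:ℤ),q)).2 = β := by
          rw [hrowVany q (by omega) (by omega) p xB (by omega) (by omega) h3 h4
            (Or.inr (Or.inr ⟨le_rfl, hR⟩)), hB1]
        have e4 : (dirsOf φ ((p:ℤ),q+1)).2 = (dirsOf φ (xB,q+1)).2 :=
          hrowVany (q+1) (by omega) (by omega) p xB (by omega) (by omega) h3 h4
            (Or.inr (Or.inr ⟨le_rfl, hR⟩))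
        have hst := hstar ((dirsOf φ (xA,q)).2)
        rw [e1, e2, e3, e4] at hst
        rw [decide_eq_true rfl, decide_eq_false (fun h => hA1 h)] at hst
        by_cases hdd : (dirsOf φ (xA,q)).2 = (dirsOf φ (xB,q+1)).2
        · refine hfin ((dirsOf φ (xA,q)).2) hA1 ?_ ?_
          · intro x hxx1 hxx2
            rcases le_or_gt x (p-1) with hxp | hxp
            · left
              rw [hrowVany q (by omega) (by omega) x xA hxx1 hxx2 h1 h2
                (Or.inr (Or.inl ⟨hxp, hL⟩))]
            · right
              rw [hrowVany (q+1) (by omega) (by omega) x xB hxx1 hxx2 h3 h4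
                (Or.inr (Or.inr ⟨by omega, hR⟩)), ← hdd]
          · intro x hxx1 hxx2
            rcases le_or_gt x (p-1) with hxp | hxp
            · right
              rw [hrowVany (q+1) (by omega) (by omega) x xA hxx1 hxx2 h1 h2
                (Or.inr (Or.inl ⟨hxp, hL⟩)), hA2]
            · left
              rw [hrowVany q (by omega) (by omega) x xB hxx1 hxx2 h3 h4
                (Or.inr (Or.inr ⟨by omega, hR⟩)), hB1]
        · rw [decide_eq_false hdd] at hst
          simp at hst
      · have e1 : (dirsOf φ ((p-1:ℤ),q)).2 = β := by
          rw [hrowVany q (by omega) (by omega) (p-1) xB (by omega) (by omega) h3 h4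
            (Or.inr (Or.inl ⟨by omega, hL⟩)), hB1]
        have e2 : (dirsOf φ ((p-1:ℤ),q+1)).2 = (dirsOf φ (xB,q+1)).2 :=
          hrowVany (q+1) (by omega) (by omega) (p-1) xB (by omega) (by omega) h3 h4
            (Or.inr (Or.inl ⟨by omega, hL⟩))
        have e3 : (dirsOf φ ((p:ℤ),q)).2 = (dirsOf φ (xA,q)).2 :=
          hrowVany q (by omega) (by omega) p xA (by omega) (by omega) h1 h2
            (Or.inr (Or.inr ⟨le_rfl, hR⟩))
        have e4 : (dirsOf φ ((p:ℤ),q+1)).2 = β := by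
          rw [hrowVany (q+1) (by omega) (by omega) p xA (by omega) (by omega) h1 h2
            (Or.inr (Or.inr ⟨le_rfl, hR⟩)), hA2]
        have hst := hstar ((dirsOf φ (xB,q+1)).2)
        rw [e1, e2, e3, e4] at hst
        rw [decide_eq_true rfl, decide_eq_false (fun h => hB2 h)] at hst
        by_cases hdd : (dirsOf φ (xB,q+1)).2 = (dirsOf φ (xA,q)).2
        · refine hfin ((dirsOf φ (xA,q)).2) hA1 ?_ ?_
          · intro x hxx1 hxx2
            rcases le_or_gt x (p-1) with hxp | hxp
            · right
              rw [hrowVany (q+1) (by omega) (by omega) x xB hxx1 hxx2 h3 h4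
                (Or.inr (Or.inl ⟨hxp, hL⟩)), ← hdd]
            · left
              rw [hrowVany q (by omega) (by omega) x xA hxx1 hxx2 h1 h2
                (Or.inr (Or.inr ⟨by omega, hR⟩))]
          · intro x hxx1 hxx2
            rcases le_or_gt x (p-1) with hxp | hxp
            · left
              rw [hrowVany q (by omega) (by omega) x xB hxx1 hxx2 h3 h4
                (Or.inr (Or.inl ⟨hxp, hL⟩)), hB1]
            · right
              rw [hrowVany (q+1) (by omega) (by omega) x xA hxx1 hxx2 h1 h2
                (Or.inr (Or.inr ⟨by omega, hR⟩)), hA2]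
        · rw [decide_eq_false hdd] at hst
          simp at hst
    obtain ⟨⟨xa, ya⟩, hca, hcma⟩ := hsurj (β, false)
    obtain ⟨⟨xb, yb⟩, hcb, hcmb⟩ := hsurj (β, true)
    obtain ⟨ha1, ha2, ha3, ha4⟩ := hmemrev _ hca
    obtain ⟨hb1, hb2, hb3, hb4⟩ := hmemrev _ hcb
    simp only at ha1 ha2 ha3 ha4 hb1 hb2 hb3 hb4
    have hfa : (φ.cellMap (xa,ya)).1 = β := by rw [hcma]
    have hfb : (φ.cellMap (xb,yb)).1 = β := by rw [hcmb]
    have hSa : φ.vertMap (xa,ya) (0,0) β = false := by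
      have h := φ.vert_on_face (xa,ya) hca (0,0)
      rw [hcma] at h
      simpa using h
    have hSb : φ.vertMap (xb,yb) (0,0) β = true := by
      have h := φ.vert_on_face (xb,yb) hcb (0,0)
      rw [hcmb] at h
      simpa using h
    have hd2a : (dirsOf φ (xa,ya)).2 ≠ β :=
      fun h => (cellMap_fst_ne φ hca).2 (hfa.trans h.symm)
    have hd2b : (dirsOf φ (xb,yb)).2 ≠ β :=
      fun h => (cellMap_fst_ne φ hcb).2 (hfb.trans h.symm)
    have hya : ya = q ∨ ya = q + 1 := by
      by_contra h
      push_neg at h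
      exact hd2a (hd2row ya ha3 ha4 h.1 h.2 xa ha1 ha2)
    have hyb : yb = q ∨ yb = q + 1 := by
      by_contra h
      push_neg at h
      exact hd2b (hd2row yb hb3 hb4 h.1 h.2 xb hb1 hb2)
    rcases hya with hya | hya <;> rcases hyb with hyb | hyb <;>
      [(replace hya := hya.symm; replace hyb := hyb.symm; subst hya; subst hyb);
       (replace hya := hya.symm; replace hyb := hyb.symm; subst hya; subst hyb);
       (replace hya := hya.symm; replace hyb := hyb.symm; subst hya; subst hyb);
       (replace hya := hya.symm; replace hyb := hyb.symm; subst hya; subst hyb)]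
    · -- both in row q
      rw [hSq xa ha1 ha2] at hSa
      rw [hSq xb hb1 hb2] at hSb
      rw [hSa] at hSb
      exact absurd hSb (by decide)
    · -- ya = q, yb = q+1
      have hS0b : φ.vertMap ((0:ℤ),q+2) (0,0) β = true := by
        rw [hSq2 xb hb1 hb2, hSb, decide_eq_false (fun h => hd2b h.symm)]
        rfl
      have hS0a : φ.vertMap ((0:ℤ),q-1) (0,0) β = true := by
        have h := hSq xa ha1 ha2
        rw [hSa] at h
        simpa using h.symm
      have c1 : φ.vertMap (xa,q+1) (0,0) β = false := by
        have h := hstepV xa q ha1 ha2 (by omega) (by omega) β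
        rw [hSa, decide_eq_false (fun h => hd2a h.symm)] at h
        simpa using h
      have c2 : (dirsOf φ (xa,q+1)).2 = β := by
        have h := hSq2 xa ha1 ha2
        rw [hS0b, c1] at h
        simp only [Bool.false_xor] at h
        exact (of_decide_eq_true h.symm).symm
      have c4 : (dirsOf φ (xb,q)).2 = β := by
        have h := hstepV xb q hb1 hb2 (by omega) (by omega) β
        rw [hSb, hSq xb hb1 hb2, hS0a] at h
        simp only [Bool.not_true, Bool.false_xor] at h
        exact (of_decide_eq_true h.symm).symm
      exact key xa xb ha1 ha2 hb1 hb2 hd2a c2 c4 hd2b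
    · -- ya = q+1, yb = q
      have hS0b : φ.vertMap ((0:ℤ),q+2) (0,0) β = false := by
        rw [hSq2 xa ha1 ha2, hSa, decide_eq_false (fun h => hd2a h.symm)]
        rfl
      have hS0a : φ.vertMap ((0:ℤ),q-1) (0,0) β = false := by
        have h := hSq xb hb1 hb2
        rw [hSb] at h
        simpa using h.symm
      have c1 : φ.vertMap (xb,q+1) (0,0) β = true := by
        have h := hstepV xb q hb1 hb2 (by omega) (by omega) β
        rw [hSb, decide_eq_false (fun h => hd2b h.symm)] at h
        simpa using h
      have c2 : (dirsOf φ (xb,q+1)).2 = β := by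
        have h := hSq2 xb hb1 hb2
        rw [hS0b, c1] at h
        simp only [Bool.true_xor] at h
        have h2 : decide (β = (dirsOf φ (xb,q+1)).2) = true := by
          rcases Bool.decide_coe (β = (dirsOf φ (xb,q+1)).2) with _
          cases hdec : decide (β = (dirsOf φ (xb,q+1)).2)
          · rw [hdec] at h; simp at h
          · rfl
        exact (of_decide_eq_true h2).symm
      have c4 : (dirsOf φ (xa,q)).2 = β := by
        have h := hstepV xa q ha1 ha2 (by omega) (by omega) β
        rw [hSa, hSq xa ha1 ha2, hS0a] at h
        simp only [Bool.not_false, Bool.true_xor] at h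
        have h2 : decide (β = (dirsOf φ (xa,q)).2) = true := by
          cases hdec : decide (β = (dirsOf φ (xa,q)).2)
          · rw [hdec] at h; simp at h
          · rfl
        exact (of_decide_eq_true h2).symm
      exact key xb xa hb1 hb2 ha1 ha2 hd2b c2 c4 hd2a
    · -- both in row q+1
      have h1 := hSq2 xa ha1 ha2
      have h2 := hSq2 xb hb1 hb2
      rw [hSa, decide_eq_false (fun h => hd2a h.symm)] at h1
      rw [hSb, decide_eq_false (fun h => hd2b h.symm)] at h2
      rw [h1] at h2
      exact absurd h2 (by decide)

end Main

section Transpose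

def swapC (c : Cell) : Cell := (c.2, c.1)

def sw2 (e : Cell × Cell) : Cell × Cell := (swapC e.1, swapC e.2)

def transposeP (P : Polyomino) : Polyomino where
  cells := P.cells.image swapC
  nonempty := P.nonempty.image _
  joins := P.joins.image sw2
  joins_symm := by
    intro e he
    simp only [Finset.mem_image] at he ⊢
    obtain ⟨a, ha, rfl⟩ := he
    exact ⟨(a.2, a.1), P.joins_symm a ha, rfl⟩
  joins_mem := by
    intro e he
    simp only [Finset.mem_image] at he
    obtain ⟨a, ha, rfl⟩ := he
    obtain ⟨h1, h2⟩ := P.joins_mem a ha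
    exact ⟨Finset.mem_image_of_mem _ h1, Finset.mem_image_of_mem _ h2⟩
  joins_adj := by
    intro e he
    simp only [Finset.mem_image] at he
    obtain ⟨a, ha, rfl⟩ := he
    have h := P.joins_adj a ha
    simp only [cellAdj, sw2, swapC] at h ⊢
    omega
  connected := by
    intro c hc d hd
    simp only [Finset.mem_image] at hc hd
    obtain ⟨a, ha, rfl⟩ := hc
    obtain ⟨b, hb, rfl⟩ := hd
    have h := P.connected a ha b hb
    exact Relation.ReflTransGen.lift (p := fun a b => (a, b) ∈ Finset.image sw2 P.joins) swapC
      (fun x y hxy => show (swapC x, swapC y) ∈ Finset.image sw2 P.joins from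
        Finset.mem_image_of_mem sw2 (show ((x, y) : Cell × Cell) ∈ P.joins from hxy)) _ _ h

def transposeCM {P : Polyomino} (φ : ConsMap P) : ConsMap (transposeP P) where
  cellMap c := φ.cellMap (c.2, c.1)
  vertMap c k := φ.vertMap (c.2, c.1) (k.2, k.1)
  vert_on_face := by
    intro c hc k
    have hc' : ((c.2, c.1) : Cell) ∈ P.cells := by
      simp only [transposeP, Finset.mem_image] at hc
      obtain ⟨a, ha, rfl⟩ := hc
      simpa [swapC] using ha
    exact φ.vert_on_face _ hc' (k.2, k.1)
  face_iso := by
    intro c hc k k'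
    have hc' : ((c.2, c.1) : Cell) ∈ P.cells := by
      simp only [transposeP, Finset.mem_image] at hc
      obtain ⟨a, ha, rfl⟩ := hc
      simpa [swapC] using ha
    have h := φ.face_iso _ hc' (k.2, k.1) (k'.2, k'.1)
    rw [h]
    simp only [kdiff]
    exact add_comm _ _
  join_compat := by
    intro e he k k' hcc
    simp only [transposeP, Finset.mem_image] at he
    obtain ⟨a, ha, rfl⟩ := he
    refine φ.join_compat a ha (k.2, k.1) (k'.2, k'.1) ?_
    simp only [cornerPt, sw2, swapC, Prod.mk.injEq] at hcc ⊢
    exact ⟨hcc.2, hcc.1⟩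

lemma transposeCM_surj {P : Polyomino} (φ : ConsMap P) (h : φ.Surjective) :
    (transposeCM φ).Surjective := by
  intro f
  obtain ⟨c, hc, hcm⟩ := h f
  exact ⟨swapC c, Finset.mem_image_of_mem _ hc, hcm⟩

lemma rect_transpose (m n : ℕ) : (rectCells m n).image swapC = rectCells n m := by
  ext c
  simp only [Finset.mem_image, rectCells, Finset.mem_Icc, Prod.le_def, swapC]
  constructor
  · rintro ⟨a, ⟨⟨h1, h2⟩, h3, h4⟩, rfl⟩
    simp only at h1 h2 h3 h4 ⊢
    refine ⟨⟨?_, ?_⟩, ?_, ?_⟩ <;> simpa using by omega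
  · rintro ⟨⟨h1, h2⟩, h3, h4⟩
    refine ⟨(c.2, c.1), ⟨⟨?_, ?_⟩, ?_, ?_⟩, ?_⟩
    · simpa using h2
    · simpa using h1
    · simpa using h4
    · simpa using h3
    · exact Prod.ext rfl rfl

lemma sw2_inj : Function.Injective sw2 := by
  rintro ⟨⟨a1, a2⟩, a3, a4⟩ ⟨⟨b1, b2⟩, b3, b4⟩ h
  simp only [sw2, swapC, Prod.mk.injEq] at h
  simp [Prod.ext_iff]
  tauto

lemma fullJoins_image_sw2 (S : Finset Cell) :
    (fullJoins S).image sw2 = fullJoins (S.image swapC) := by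
  ext e
  simp only [fullJoins, Finset.mem_image, Finset.mem_filter, Finset.mem_product]
  constructor
  · rintro ⟨a, ⟨⟨ha1, ha2⟩, hadj⟩, rfl⟩
    refine ⟨⟨⟨a.1, ha1, rfl⟩, ⟨a.2, ha2, rfl⟩⟩, ?_⟩
    simp only [cellAdj, sw2, swapC] at hadj ⊢
    omega
  · rintro ⟨⟨⟨a1, ha1, h1⟩, ⟨a2, ha2, h2⟩⟩, hadj⟩
    refine ⟨(a1, a2), ⟨⟨ha1, ha2⟩, ?_⟩, ?_⟩
    · rw [← h1, ← h2] at hadj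
      simp only [cellAdj, swapC] at hadj ⊢
      omega
    · rw [sw2]
      simp only [h1, h2]

lemma remPair_image (e : Cell × Cell) : (remPair e).image sw2 = remPair (sw2 e) := by
  simp only [remPair, Finset.image_insert, Finset.image_singleton]
  rfl

lemma no_surj_islit (P : Polyomino) (m n : ℕ) (hP : RectWithISlit2 P m n) :
    ¬ ∃ φ : ConsMap P, φ.Surjective := by
  rintro ⟨φ, hφ⟩
  obtain ⟨p, q, hcase | hcase⟩ := hP
  · obtain ⟨h1, h2, h3, hc, hj⟩ := hcase
    exact no_surj_vertical P m n p q h1.1 h1.2.1 h1.2.2.1 h3.2.2.2 hc hj φ hφ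
  · obtain ⟨h1, h2, h3, hc, hj⟩ := hcase
    refine no_surj_vertical (transposeP P) n m q p h1.2.2.1 h1.2.2.2 h1.1 h3.2.1 ?_ ?_
      (transposeCM φ) (transposeCM_surj φ hφ)
    · show P.cells.image swapC = rectCells n m
      rw [hc, rect_transpose]
    · show P.joins.image sw2 = _
      rw [hj, Finset.image_sdiff _ _ sw2_inj, fullJoins_image_sw2, rect_transpose,
        Finset.image_union, remPair_image, remPair_image]
      rfl

end Transpose

section Geometry

/-- A corner of the unit square as a point of the unit square. -/
def cornerS (k : Fin 2 × Fin 2) : {x : R2 // x ∈ unitSq} :=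
  ⟨mk2 ((k.1 : ℕ) : ℝ) ((k.2 : ℕ) : ℝ), by
    rcases k with ⟨k1, k2⟩
    fin_cases k1 <;> fin_cases k2 <;> norm_num [unitSq, mk2]⟩

lemma cornerS_c0 (k : Fin 2 × Fin 2) : (cornerS k).1 0 = ((k.1 : ℕ) : ℝ) := rfl
lemma cornerS_c1 (k : Fin 2 × Fin 2) : (cornerS k).1 1 = ((k.2 : ℕ) : ℝ) := rfl

lemma ite01_inj (b1 b2 : Bool) (h : (if b1 then (1:ℝ) else 0) = if b2 then 1 else 0) :
    b1 = b2 := by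
  cases b1 <;> cases b2 <;> simp_all <;> norm_num at h

def flipIf (s : Fin 2) (d : Fin 3) (a : Fin 3 → Bool) : Fin 3 → Bool :=
  if s = 1 then bflip d a else a

lemma vdiff_flips : ∀ (a : Fin 3 → Bool) (du dv : Fin 3), du ≠ dv → ∀ s1 t1 s2 t2 : Fin 2,
    vdiff (flipIf s1 du (flipIf t1 dv a)) (flipIf s2 du (flipIf t2 dv a))
      = kdiff (s1, t1) (s2, t2) := by decide

lemma cover_swap : ∀ i0 j k du dv : Fin 3, du ≠ dv → (du = j ∨ du = k) → (dv = j ∨ dv = k) →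
    (∀ l : Fin 3, l = i0 ∨ l = j ∨ l = k) → (∀ l : Fin 3, l = i0 ∨ l = du ∨ l = dv) := by
  decide

lemma three_coords : ∀ i0 : Fin 3, ∃ j k : Fin 3, j ≠ k ∧ i0 ≠ j ∧ i0 ≠ k ∧
    ∀ l : Fin 3, l = i0 ∨ l = j ∨ l = k := by decide

set_option maxHeartbeats 1000000 in
lemma square_in_cube (g : {x : R2 // x ∈ unitSq} → R3)
    (hiso : ∀ x y : {x : R2 // x ∈ unitSq}, dist (g x) (g y) = dist x.1 y.1)
    (hcube : ∀ x, g x ∈ cubeSurface) :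
    ∃ (w : Fin 2 × Fin 2 → Fin 3 → Bool) (ι : Fin 3) (b : Bool),
      (∀ k (i : Fin 3), g (cornerS k) i = if w k i then 1 else 0) ∧
      (∀ k k', vdiff (w k) (w k') = kdiff k k') ∧
      (∀ k, w k ι = b) ∧
      (∀ x, g x ι = if b then 1 else 0) := by
  have hsq : ∀ x y : {x : R2 // x ∈ unitSq},
      ∑ i : Fin 3, (g x i - g y i)^2 = (x.1 0 - y.1 0)^2 + (x.1 1 - y.1 1)^2 := by
    intro x y
    have h := hiso x y
    rw [EuclideanSpace.dist_eq, EuclideanSpace.dist_eq] at h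
    have h1 : ∑ i : Fin 3, dist (g x i) (g y i) ^ 2 = ∑ i : Fin 2, dist (x.1 i) (y.1 i) ^ 2 := by
      have := congrArg (· ^ 2) h
      simp only at this
      rwa [Real.sq_sqrt (by positivity), Real.sq_sqrt (by positivity)] at this
    simp only [Real.dist_eq, sq_abs] at h1
    rw [h1, Fin.sum_univ_two]
  have hbounds : ∀ x (i : Fin 3), 0 ≤ g x i ∧ g x i ≤ 1 := fun x i => (hcube x).1 i
  obtain ⟨u, hu⟩ : ∃ u : Fin 3 → ℝ, u = fun i => g (cornerS (1,0)) i - g (cornerS (0,0)) i :=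
    ⟨_, rfl⟩
  obtain ⟨v, hv⟩ : ∃ v : Fin 3 → ℝ, v = fun i => g (cornerS (0,1)) i - g (cornerS (0,0)) i :=
    ⟨_, rfl⟩
  have haff : ∀ (x : {x : R2 // x ∈ unitSq}) (i : Fin 3),
      g x i = g (cornerS (0,0)) i + (x.1 0) * u i + (x.1 1) * v i := by
    intro x i
    have W2 := hsq x (cornerS (0,0))
    have WU := hsq x (cornerS (1,0))
    have WV := hsq x (cornerS (0,1))
    have U2 := hsq (cornerS (1,0)) (cornerS (0,0))
    have V2 := hsq (cornerS (0,1)) (cornerS (0,0))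
    have UV := hsq (cornerS (1,0)) (cornerS (0,1))
    simp only [Fin.sum_univ_three, cornerS_c0, cornerS_c1] at W2 WU WV U2 V2 UV
    norm_num at W2 WU WV U2 V2 UV
    have hS : (g x 0 - g (cornerS (0,0)) 0 - (x.1 0) * u 0 - (x.1 1) * v 0)^2
        + (g x 1 - g (cornerS (0,0)) 1 - (x.1 0) * u 1 - (x.1 1) * v 1)^2
        + (g x 2 - g (cornerS (0,0)) 2 - (x.1 0) * u 2 - (x.1 1) * v 2)^2 = 0 := by
      simp only [hu, hv]
      linear_combination (1 - x.1 0 - x.1 1) * W2 + ((x.1 0)^2 - x.1 0 + x.1 0 * x.1 1) * U2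
        + ((x.1 1)^2 - x.1 1 + x.1 0 * x.1 1) * V2 + (x.1 0) * WU + (x.1 1) * WV
        - (x.1 0) * (x.1 1) * UV
    have h0 : ∀ i : Fin 3, g x i - g (cornerS (0,0)) i - (x.1 0) * u i - (x.1 1) * v i = 0 := by
      intro i
      fin_cases i
      · have : (g x 0 - g (cornerS (0,0)) 0 - (x.1 0) * u 0 - (x.1 1) * v 0)^2 = 0 := by
          linarith [sq_nonneg (g x 0 - g (cornerS (0,0)) 0 - (x.1 0) * u 0 - (x.1 1) * v 0),
            sq_nonneg (g x 1 - g (cornerS (0,0)) 1 - (x.1 0) * u 1 - (x.1 1) * v 1),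
            sq_nonneg (g x 2 - g (cornerS (0,0)) 2 - (x.1 0) * u 2 - (x.1 1) * v 2), hS]
        exact (pow_eq_zero_iff (by norm_num : (2:ℕ) ≠ 0)).mp this
      · have : (g x 1 - g (cornerS (0,0)) 1 - (x.1 0) * u 1 - (x.1 1) * v 1)^2 = 0 := by
          linarith [sq_nonneg (g x 0 - g (cornerS (0,0)) 0 - (x.1 0) * u 0 - (x.1 1) * v 0),
            sq_nonneg (g x 1 - g (cornerS (0,0)) 1 - (x.1 0) * u 1 - (x.1 1) * v 1),
            sq_nonneg (g x 2 - g (cornerS (0,0)) 2 - (x.1 0) * u 2 - (x.1 1) * v 2), hS]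
        exact (pow_eq_zero_iff (by norm_num : (2:ℕ) ≠ 0)).mp this
      · have : (g x 2 - g (cornerS (0,0)) 2 - (x.1 0) * u 2 - (x.1 1) * v 2)^2 = 0 := by
          linarith [sq_nonneg (g x 0 - g (cornerS (0,0)) 0 - (x.1 0) * u 0 - (x.1 1) * v 0),
            sq_nonneg (g x 1 - g (cornerS (0,0)) 1 - (x.1 0) * u 1 - (x.1 1) * v 1),
            sq_nonneg (g x 2 - g (cornerS (0,0)) 2 - (x.1 0) * u 2 - (x.1 1) * v 2), hS]
        exact (pow_eq_zero_iff (by norm_num : (2:ℕ) ≠ 0)).mp this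
    have := h0 i
    linarith
  -- corner identities
  have hc10 : ∀ i : Fin 3, g (cornerS (1,0)) i = g (cornerS (0,0)) i + u i := by
    intro i; simp only [hu]; ring
  have hc01 : ∀ i : Fin 3, g (cornerS (0,1)) i = g (cornerS (0,0)) i + v i := by
    intro i; simp only [hv]; ring
  have hc11 : ∀ i : Fin 3, g (cornerS (1,1)) i = g (cornerS (0,0)) i + u i + v i := by
    intro i
    have h := haff (cornerS (1,1)) i
    rw [cornerS_c0, cornerS_c1] at h
    rw [show ((((1:Fin 2) : ℕ)) : ℝ) = 1 by norm_num] at h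
    linarith
  -- the center
  have hctrmem : mk2 (1/2) (1/2) ∈ unitSq := by norm_num [unitSq, mk2]
  obtain ⟨i0, hi0⟩ := (hcube ⟨mk2 (1/2) (1/2), hctrmem⟩).2
  have hctr : g ⟨mk2 (1/2) (1/2), hctrmem⟩ i0
      = g (cornerS (0,0)) i0 + (1/2) * u i0 + (1/2) * v i0 := by
    have := haff ⟨mk2 (1/2) (1/2), hctrmem⟩ i0
    simpa [mk2] using this
  have hu0 : u i0 = 0 ∧ v i0 = 0 := by
    obtain ⟨b00a, b00b⟩ := hbounds (cornerS (0,0)) i0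
    obtain ⟨b10a, b10b⟩ := hbounds (cornerS (1,0)) i0
    obtain ⟨b01a, b01b⟩ := hbounds (cornerS (0,1)) i0
    obtain ⟨b11a, b11b⟩ := hbounds (cornerS (1,1)) i0
    rw [hc10 i0] at b10a b10b
    rw [hc01 i0] at b01a b01b
    rw [hc11 i0] at b11a b11b
    rcases hi0 with h | h <;> rw [hctr] at h <;> constructor <;> linarith
  have hconst : ∀ x, g x i0 = g (cornerS (0,0)) i0 := by
    intro x
    rw [haff x i0, hu0.1, hu0.2]
    ring
  have hg00i0 : g (cornerS (0,0)) i0 = 0 ∨ g (cornerS (0,0)) i0 = 1 := by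
    rcases hi0 with h | h
    · left; rw [← hconst ⟨mk2 (1/2) (1/2), hctrmem⟩]; exact h
    · right; rw [← hconst ⟨mk2 (1/2) (1/2), hctrmem⟩]; exact h
  obtain ⟨j, k, hjk, hij, hik, hcover⟩ := three_coords i0
  have hsum3 : ∀ f : Fin 3 → ℝ, ∑ l, f l = f i0 + f j + f k := by
    intro f
    have huniv : (Finset.univ : Finset (Fin 3)) = {i0, j, k} := by
      apply Finset.ext
      intro l
      simp only [Finset.mem_univ, Finset.mem_insert, Finset.mem_singleton, true_iff]
      exact hcover l
    rw [huniv, Finset.sum_insert (by simp [hij, hik]), Finset.sum_insert (by simp [hjk]),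
      Finset.sum_singleton]
    ring
  have c1r : (((1 : Fin 2) : ℕ) : ℝ) = 1 := by norm_num
  have c0r : (((0 : Fin 2) : ℕ) : ℝ) = 0 := by norm_num
  have hz10 : g (cornerS (1,0)) i0 - g (cornerS (0,0)) i0 = 0 := by
    have h1 := hu0.1
    rw [hu] at h1
    simpa using h1
  have hz01 : g (cornerS (0,1)) i0 - g (cornerS (0,0)) i0 = 0 := by
    have h1 := hu0.2
    rw [hv] at h1
    simpa using h1
  have hU2 : u j ^ 2 + u k ^ 2 = 1 := by
    have h := hsq (cornerS (1,0)) (cornerS (0,0))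
    rw [hsum3] at h
    simp only [cornerS_c0, cornerS_c1] at h
    rw [c1r, c0r] at h
    simp only [hu]
    linear_combination h - (g (cornerS (1,0)) i0 - g (cornerS (0,0)) i0) * hz10
  have hV2 : v j ^ 2 + v k ^ 2 = 1 := by
    have h := hsq (cornerS (0,1)) (cornerS (0,0))
    rw [hsum3] at h
    simp only [cornerS_c0, cornerS_c1] at h
    rw [c1r, c0r] at h
    simp only [hv]
    linear_combination h - (g (cornerS (0,1)) i0 - g (cornerS (0,0)) i0) * hz01
  have hUV : u j * v j + u k * v k = 0 := by
    have h := hsq (cornerS (1,0)) (cornerS (0,1))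
    rw [hsum3] at h
    simp only [cornerS_c0, cornerS_c1] at h
    rw [c1r, c0r] at h
    have hU2' := hU2
    have hV2' := hV2
    simp only [hu, hv] at hU2' hV2' ⊢
    linear_combination (1/2) * hU2' + (1/2) * hV2' - (1/2) * h
      + (1/2) * (g (cornerS (1,0)) i0 - g (cornerS (0,1)) i0) * hz10
      - (1/2) * (g (cornerS (1,0)) i0 - g (cornerS (0,1)) i0) * hz01
  have habs : ∀ l : Fin 3, |u l| + |v l| ≤ 1 := by
    intro l
    obtain ⟨b00a, b00b⟩ := hbounds (cornerS (0,0)) l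
    obtain ⟨b10a, b10b⟩ := hbounds (cornerS (1,0)) l
    obtain ⟨b01a, b01b⟩ := hbounds (cornerS (0,1)) l
    obtain ⟨b11a, b11b⟩ := hbounds (cornerS (1,1)) l
    rw [hc10 l] at b10a b10b
    rw [hc01 l] at b01a b01b
    rw [hc11 l] at b11a b11b
    rcases abs_cases (u l) with ⟨h1, _⟩ | ⟨h1, _⟩ <;>
      rcases abs_cases (v l) with ⟨h2, _⟩ | ⟨h2, _⟩ <;> rw [h1, h2] <;> linarith
  have hl1u : 1 ≤ |u j| + |u k| := by
    nlinarith [sq_abs (u j), sq_abs (u k), abs_nonneg (u j), abs_nonneg (u k),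
      mul_nonneg (abs_nonneg (u j)) (abs_nonneg (u k)), hU2]
  have hl1v : 1 ≤ |v j| + |v k| := by
    nlinarith [sq_abs (v j), sq_abs (v k), abs_nonneg (v j), abs_nonneg (v k),
      mul_nonneg (abs_nonneg (v j)) (abs_nonneg (v k)), hV2]
  have hequ : |u j| + |u k| = 1 ∧ |v j| + |v k| = 1 := by
    have h1 := habs j
    have h2 := habs k
    constructor <;> linarith
  have hprodu : u j * u k = 0 := by
    have h : |u j| * |u k| = 0 := by
      nlinarith [sq_abs (u j), sq_abs (u k), hU2, hequ.1]
    rcases mul_eq_zero.mp h with h | h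
    · rw [abs_eq_zero] at h; rw [h]; ring
    · rw [abs_eq_zero] at h; rw [h]; ring
  have hprodv : v j * v k = 0 := by
    have h : |v j| * |v k| = 0 := by
      nlinarith [sq_abs (v j), sq_abs (v k), hV2, hequ.2]
    rcases mul_eq_zero.mp h with h | h
    · rw [abs_eq_zero] at h; rw [h]; ring
    · rw [abs_eq_zero] at h; rw [h]; ring
  -- extract du, dv
  have hmain : ∃ du dv : Fin 3, du ≠ dv ∧ i0 ≠ du ∧ i0 ≠ dv ∧
      (du = j ∨ du = k) ∧ (dv = j ∨ dv = k) ∧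
      (u du = 1 ∨ u du = -1) ∧ (v dv = 1 ∨ v dv = -1) ∧
      (∀ l, l ≠ du → u l = 0) ∧ (∀ l, l ≠ dv → v l = 0) := by
    rcases mul_eq_zero.mp hprodu with hz | hz
    · -- u j = 0, so u k = ±1, v k = 0, v j = ±1
      have huk : u k ^ 2 = 1 := by nlinarith [hU2]
      have hukne : u k ≠ 0 := by intro h; rw [h] at huk; norm_num at huk
      have hvk : v k = 0 := by
        have := hUV
        rw [hz] at this
        simp at this
        rcases this with h | h
        · exact absurd h hukne
        · exact h
      have hvj : v j ^ 2 = 1 := by nlinarith [hV2]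
      refine ⟨k, j, hjk.symm, hik, hij, Or.inr rfl, Or.inl rfl, ?_, ?_, ?_, ?_⟩
      · rcases mul_eq_zero.mp (show (u k - 1) * (u k + 1) = 0 by nlinarith [huk]) with h | h
        · left; linarith
        · right; linarith
      · rcases mul_eq_zero.mp (show (v j - 1) * (v j + 1) = 0 by nlinarith [hvj]) with h | h
        · left; linarith
        · right; linarith
      · intro l hl
        rcases hcover l with rfl | rfl | rfl
        · exact hu0.1
        · exact hz
        · exact absurd rfl hl
      · intro l hl
        rcases hcover l with rfl | rfl | rfl
        · exact hu0.2
        · exact absurd rfl hl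
        · exact hvk
    · -- u k = 0, so u j = ±1, v j = 0, v k = ±1
      have huj : u j ^ 2 = 1 := by nlinarith [hU2]
      have hujne : u j ≠ 0 := by intro h; rw [h] at huj; norm_num at huj
      have hvj : v j = 0 := by
        have := hUV
        rw [hz] at this
        simp at this
        rcases this with h | h
        · exact absurd h hujne
        · exact h
      have hvk : v k ^ 2 = 1 := by nlinarith [hV2]
      refine ⟨j, k, hjk, hij, hik, Or.inl rfl, Or.inr rfl, ?_, ?_, ?_, ?_⟩
      · rcases mul_eq_zero.mp (show (u j - 1) * (u j + 1) = 0 by nlinarith [huj]) with h | h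
        · left; linarith
        · right; linarith
      · rcases mul_eq_zero.mp (show (v k - 1) * (v k + 1) = 0 by nlinarith [hvk]) with h | h
        · left; linarith
        · right; linarith
      · intro l hl
        rcases hcover l with rfl | rfl | rfl
        · exact hu0.1
        · exact absurd rfl hl
        · exact hz
      · intro l hl
        rcases hcover l with rfl | rfl | rfl
        · exact hu0.2
        · exact hvj
        · exact absurd rfl hl
  obtain ⟨du, dv, hdudv, hi0du, hi0dv, hduJK, hdvJK, hudu, hvdv, huz, hvz⟩ := hmain
  have hcover' : ∀ l : Fin 3, l = i0 ∨ l = du ∨ l = dv :=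
    cover_swap i0 j k du dv hdudv hduJK hdvJK hcover
  -- values of g at corners
  have hcorner : ∀ (s t : Fin 2) (l : Fin 3), g (cornerS (s,t)) l
      = g (cornerS (0,0)) l + ((s:ℕ):ℝ) * u l + ((t:ℕ):ℝ) * v l := by
    intro s t l
    have := haff (cornerS (s,t)) l
    rw [cornerS_c0, cornerS_c1] at this
    exact this
  have hg00du : (u du = 1 → g (cornerS (0,0)) du = 0) ∧
      (u du = -1 → g (cornerS (0,0)) du = 1) := by
    obtain ⟨b00a, b00b⟩ := hbounds (cornerS (0,0)) du
    obtain ⟨b10a, b10b⟩ := hbounds (cornerS (1,0)) du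
    rw [hc10 du] at b10a b10b
    constructor <;> intro h <;> rw [h] at b10a b10b <;> linarith
  have hg00dv : (v dv = 1 → g (cornerS (0,0)) dv = 0) ∧
      (v dv = -1 → g (cornerS (0,0)) dv = 1) := by
    obtain ⟨b00a, b00b⟩ := hbounds (cornerS (0,0)) dv
    obtain ⟨b01a, b01b⟩ := hbounds (cornerS (0,1)) dv
    rw [hc01 dv] at b01a b01b
    constructor <;> intro h <;> rw [h] at b01a b01b <;> linarith
  -- Boolean data
  refine ⟨fun k' l => decide (g (cornerS k') l = 1), i0, decide (g (cornerS (0,0)) i0 = 1),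
    ?_, ?_, ?_, ?_⟩
  · -- corner values are 0/1
    intro k' i
    have h01 : g (cornerS k') i = 0 ∨ g (cornerS k') i = 1 := by
      rcases k' with ⟨s, t⟩
      rcases hcover' i with h' | h' | h'
      · rw [h', hconst]
        exact hg00i0
      · rw [h', hcorner s t du, hvz du hdudv]
        rcases hudu with h | h <;> [(rw [hg00du.1 h]); (rw [hg00du.2 h])] <;> rw [h] <;>
          fin_cases s <;> norm_num
      · rw [h', hcorner s t dv, huz dv (fun hh => hdudv hh.symm)]
        rcases hvdv with h | h <;> [(rw [hg00dv.1 h]); (rw [hg00dv.2 h])] <;> rw [h] <;>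
          fin_cases t <;> norm_num
    show g (cornerS k') i = if decide (g (cornerS k') i = 1) then 1 else 0
    rcases h01 with h | h
    · rw [decide_eq_false (by rw [h]; norm_num : ¬ (g (cornerS k') i = 1))]
      rw [h]
      norm_num
    · rw [decide_eq_true h]
      rw [h]
      norm_num
  · -- vdiff = kdiff
    intro k1 k2
    have hwf : ∀ s t : Fin 2, (fun l => decide (g (cornerS (s,t)) l = 1))
        = flipIf s du (flipIf t dv (fun l => decide (g (cornerS (0,0)) l = 1))) := by
      intro s t
      funext l
      have hfi : ∀ (s' : Fin 2) (d : Fin 3) (a : Fin 3 → Bool) (l' : Fin 3),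
          flipIf s' d a l' = (a l').xor ((decide (l' = d)) && (decide (s' = 1))) := by
        intro s' d a l'
        fin_cases s' <;> simp [flipIf, bflip]
      rw [hfi, hfi]
      rcases hcover' l with h' | h' | h'
      · rw [h', hconst (cornerS (s,t))]
        rw [decide_eq_false hi0du, decide_eq_false hi0dv]
        simp
      · rw [h', hcorner s t du, hvz du hdudv]
        rw [decide_eq_false (fun hh : du = dv => hdudv hh)]
        have hdd : decide (du = du) = true := by simp
        rw [hdd]
        rcases hudu with h | h
        · rw [h, hg00du.1 h]
          fin_cases s <;> norm_num
        · rw [h, hg00du.2 h]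
          fin_cases s <;> norm_num
      · rw [h', hcorner s t dv, huz dv (fun hh => hdudv hh.symm)]
        rw [decide_eq_false (fun hh : dv = du => hdudv hh.symm)]
        have hdd : decide (dv = dv) = true := by simp
        rw [hdd]
        rcases hvdv with h | h
        · rw [h, hg00dv.1 h]
          fin_cases t <;> norm_num
        · rw [h, hg00dv.2 h]
          fin_cases t <;> norm_num
    rcases k1 with ⟨s1, t1⟩
    rcases k2 with ⟨s2, t2⟩
    show vdiff (fun l => decide (g (cornerS (s1,t1)) l = 1))
      (fun l => decide (g (cornerS (s2,t2)) l = 1)) = kdiff (s1,t1) (s2,t2)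
    rw [hwf s1 t1, hwf s2 t2]
    exact vdiff_flips _ du dv hdudv s1 t1 s2 t2
  · -- constant on corners
    intro k'
    show decide (g (cornerS k') i0 = 1) = decide (g (cornerS (0,0)) i0 = 1)
    rw [hconst (cornerS k')]
  · -- constant coordinate
    intro x
    rw [hconst x]
    rcases hg00i0 with h | h <;> rw [h] <;> norm_num

lemma consmap_of_blueprint (P : Polyomino) (β : PolySpace P → R3)
    (hblue : IsBlueprint P β) (hrange : Set.range β = cubeSurface) :
    ∃ φ : ConsMap P, φ.Surjective := by
  have hdata : ∀ (c : Cell) (hc : c ∈ P.cells), ∃ (w : Fin 2 × Fin 2 → Fin 3 → Bool)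
      (ι : Fin 3) (b : Bool),
      (∀ k (i : Fin 3), β (pt P c hc (cornerS k).1 (cornerS k).2) i = if w k i then 1 else 0) ∧
      (∀ k k', vdiff (w k) (w k') = kdiff k k') ∧ (∀ k, w k ι = b) ∧
      (∀ (x : R2) (hx : x ∈ unitSq), β (pt P c hc x hx) ι = if b then 1 else 0) := by
    intro c hc
    obtain ⟨w, ι, b, h1, h2, h3, h4⟩ := square_in_cube
      (fun x : {x : R2 // x ∈ unitSq} => β (pt P c hc x.1 x.2))
      (fun x y => hblue c hc x.1 y.1 x.2 y.2)
      (fun x => by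
        have : β (pt P c hc x.1 x.2) ∈ Set.range β := Set.mem_range_self _
        rwa [hrange] at this)
    exact ⟨w, ι, b, h1, h2, h3, fun x hx => h4 ⟨x, hx⟩⟩
  choose w ι bb hval hvd hwi hconst using hdata
  classical
  refine ⟨{ cellMap := fun c => if hc : c ∈ P.cells then (ι c hc, bb c hc) else (0, true),
            vertMap := fun c k => if hc : c ∈ P.cells then w c hc k else (fun _ => true),
            vert_on_face := ?_, face_iso := ?_, join_compat := ?_ }, ?_⟩
  · intro c hc k
    simp only [dif_pos hc]
    exact hwi c hc k
  · intro c hc k k'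
    simp only [dif_pos hc]
    exact hvd c hc k k'
  · intro e he k k' hcp
    obtain ⟨hc1, hc2⟩ := P.joins_mem e he
    simp only [dif_pos hc1, dif_pos hc2]
    have hpteq : pt P e.1 hc1 (cornerS k).1 (cornerS k).2
        = pt P e.2 hc2 (cornerS k').1 (cornerS k').2 := by
      apply Quot.sound
      refine ⟨?_, Or.inr (show (e.1, e.2) ∈ P.joins from he)⟩
      have h1 : e.1.1 + ((k.1 : ℕ) : ℤ) = e.2.1 + ((k'.1 : ℕ) : ℤ) := by
        have := congrArg Prod.fst hcp
        simpa [cornerPt] using this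
      have h2 : e.1.2 + ((k.2 : ℕ) : ℤ) = e.2.2 + ((k'.2 : ℕ) : ℤ) := by
        have := congrArg Prod.snd hcp
        simpa [cornerPt] using this
      show cellPt e.1 (cornerS k).1 = cellPt e.2 (cornerS k').1
      rw [cellPt, cellPt, cornerS_c0, cornerS_c0, cornerS_c1, cornerS_c1]
      rw [show ((e.1.1 : ℝ) + ((k.1 : ℕ) : ℝ)) = ((e.2.1 : ℝ) + ((k'.1 : ℕ) : ℝ)) from by
        exact_mod_cast h1]
      rw [show ((e.1.2 : ℝ) + ((k.2 : ℕ) : ℝ)) = ((e.2.2 : ℝ) + ((k'.2 : ℕ) : ℝ)) from by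
        exact_mod_cast h2]
    funext i
    have h1 := hval e.1 hc1 k i
    have h2 := hval e.2 hc2 k' i
    rw [hpteq] at h1
    rw [h1] at h2
    exact ite01_inj _ _ h2
  · intro f
    have hy : (WithLp.toLp 2 (fun l => if l = f.1 then (if f.2 then (1:ℝ) else 0) else 1/2) : R3) ∈ cubeSurface := by
      simp only [cubeSurface, Set.mem_setOf_eq, PiLp.toLp_apply]
      constructor
      · intro i
        by_cases h : i = f.1
        · simp only [if_pos h]
          cases f.2 <;> norm_num
        · simp only [if_neg h]
          norm_num
      · refine ⟨f.1, ?_⟩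
        simp only [if_pos rfl]
        cases f.2 <;> simp
    rw [← hrange] at hy
    obtain ⟨z, hz⟩ := hy
    obtain ⟨a, ha⟩ := Quot.exists_rep z
    obtain ⟨⟨c, hc⟩, ⟨x, hx⟩⟩ := a
    refine ⟨c, hc, ?_⟩
    have hz' : β (pt P c hc x hx)
        = (WithLp.toLp 2 (fun l => if l = f.1 then (if f.2 then (1:ℝ) else 0) else 1/2) : R3) := by
      rw [show pt P c hc x hx = z from ha]
      exact hz
    have h4 := hconst c hc x hx
    rw [hz'] at h4
    simp only [PiLp.toLp_apply] at h4
    have hιf : ι c hc = f.1 := by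
      by_contra hne
      simp only [if_neg hne] at h4
      rcases Bool.eq_false_or_eq_true (bb c hc) with h | h <;> rw [h] at h4 <;> norm_num at h4
    have hbf : bb c hc = f.2 := by
      rw [hιf] at h4
      simp only [if_pos rfl] at h4
      cases hb : bb c hc <;> cases hf : f.2 <;> rw [hb, hf] at h4 <;> first
        | rfl
        | norm_num at h4
    simp only [dif_pos hc, hιf, hbf]

lemma consmap_of_folds (P : Polyomino) (h : FoldsOntoCube P) :
    ∃ φ : ConsMap P, φ.Surjective := by
  obtain ⟨F, hvalid, β, hblue, hrange, hcorr⟩ := h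
  exact consmap_of_blueprint P β hblue hrange

end Geometry




/-- A rectangular polyomino whose only hole is an I-slit of size 2 admits no
surjective consistent mapping onto the cube; consequently it does not fold onto the cube. -/
theorem rect_islit2_no_surjective_consistent_mapping (P : Polyomino) (m n : ℕ)
    (hP : RectWithISlit2 P m n) :
    (¬ ∃ φ : ConsMap P, φ.Surjective) ∧ ¬ FoldsOntoCube P := by
  refine ⟨no_surj_islit P m n hP, fun hF => no_surj_islit P m n hP (consmap_of_folds P hF)⟩

end CubeFold
end
end

section
/- Let P be a polyomino and let P' be a rectangular sub-polyomino of P whose interior contains no point of the boundary of P. Then every consistent mapping φ from P to the surface C of the unit cube is constant on each row of P' or constant on each column of P', i.e. either any two cells of P' in a common row are mapped to the same face of C, or any two cells of P' in a common column are mapped to the same face of C. -/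
/-!
Common formal framework: polyominoes (as square complexes with possible slits),
their topological realisations, folded states, ambient isotopy, foldings onto the
surface of the unit cube, unlinks, and consistent mappings.
-/

open Classical
noncomputable section

namespace CubeFold

/-! ### Auxiliary lemmas for Statement 19 -/

private lemma vdiff_one' {u w : Fin 3 → Bool} (h : vdiff u w = 1) :
    ∃ i, u i ≠ w i ∧ ∀ j, j ≠ i → u j = w j := by
  unfold vdiff at h
  obtain ⟨i, hi⟩ := Finset.card_eq_one.mp h
  refine ⟨i, ?_, ?_⟩
  · have hmem : i ∈ Finset.univ.filter (fun j => u j ≠ w j) := hi ▸ Finset.mem_singleton_self i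
    simpa using hmem
  · intro j hj
    by_contra hne
    have hmem : j ∈ Finset.univ.filter (fun j => u j ≠ w j) := by simpa using hne
    rw [hi] at hmem
    exact hj (Finset.mem_singleton.mp hmem)

private lemma d_ne' {u w w' : Fin 3 → Bool} {i i' : Fin 3}
    (hw1 : u i ≠ w i) (hw2 : ∀ j, j ≠ i → u j = w j)
    (hw1' : u i' ≠ w' i') (hw2' : ∀ j, j ≠ i' → u j = w' j)
    (h2 : vdiff w w' = 2) : i ≠ i' := by
  intro he
  subst he
  have hww : w = w' := by
    funext j
    by_cases hj : j = i
    · subst hj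
      revert hw1 hw1'
      cases u j <;> cases w j <;> cases w' j <;> decide
    · rw [← hw2 j hj, hw2' j hj]
  rw [hww] at h2
  have hz : vdiff w' w' = 0 := by simp [vdiff]
  omega

private lemma square_lemma {u w1 w2 w3 w4 : Fin 3 → Bool} {fA fB fC fD : Fin 3 × Bool}
    (vA1 : vdiff u w1 = 1) (vA4 : vdiff u w4 = 1) (vA14 : vdiff w1 w4 = 2)
    (vB2 : vdiff u w2 = 1) (vB12 : vdiff w1 w2 = 2)
    (vC3 : vdiff u w3 = 1) (vC34 : vdiff w4 w3 = 2)
    (vD23 : vdiff w2 w3 = 2)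
    (sA : fA.2 = u fA.1) (sB : fB.2 = u fB.1) (sC : fC.2 = u fC.1) (sD : fD.2 = u fD.1)
    (agA1 : u fA.1 = w1 fA.1) (agA4 : u fA.1 = w4 fA.1)
    (agB1 : u fB.1 = w1 fB.1) (agB2 : u fB.1 = w2 fB.1)
    (agC3 : u fC.1 = w3 fC.1) (agC4 : u fC.1 = w4 fC.1)
    (agD2 : u fD.1 = w2 fD.1) (agD3 : u fD.1 = w3 fD.1) :
    (fA = fB ∧ fC = fD) ∨ (fA = fC ∧ fB = fD) := by
  obtain ⟨d1, hd1, hd1'⟩ := vdiff_one' vA1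
  obtain ⟨d2, hd2, hd2'⟩ := vdiff_one' vB2
  obtain ⟨d3, hd3, hd3'⟩ := vdiff_one' vC3
  obtain ⟨d4, hd4, hd4'⟩ := vdiff_one' vA4
  have n12 : d1 ≠ d2 := d_ne' hd1 hd1' hd2 hd2' vB12
  have n14 : d1 ≠ d4 := d_ne' hd1 hd1' hd4 hd4' vA14
  have n23 : d2 ≠ d3 := d_ne' hd2 hd2' hd3 hd3' vD23
  have n43 : d4 ≠ d3 := d_ne' hd4 hd4' hd3 hd3' vC34
  have eA1 : fA.1 ≠ d1 := fun h => hd1 (h ▸ agA1)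
  have eA4 : fA.1 ≠ d4 := fun h => hd4 (h ▸ agA4)
  have eB1 : fB.1 ≠ d1 := fun h => hd1 (h ▸ agB1)
  have eB2 : fB.1 ≠ d2 := fun h => hd2 (h ▸ agB2)
  have eC3 : fC.1 ≠ d3 := fun h => hd3 (h ▸ agC3)
  have eC4 : fC.1 ≠ d4 := fun h => hd4 (h ▸ agC4)
  have eD2 : fD.1 ≠ d2 := fun h => hd2 (h ▸ agD2)
  have eD3 : fD.1 ≠ d3 := fun h => hd3 (h ▸ agD3)
  have fin3 : ∀ p q i j : Fin 3, p ≠ q → i ≠ p → i ≠ q → j ≠ p → j ≠ q → i = j := by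
    have hdec : ∀ p q i j : Fin 3, i = p ∨ i = q ∨ j = p ∨ j = q ∨ p = q ∨ i = j := by decide
    intro p q i j h1 h2 h3 h4 h5
    rcases hdec p q i j with h' | h' | h' | h' | h' | h' <;> tauto
  have fin3' : ∀ p q r s : Fin 3, p ≠ q → p ≠ r → p ≠ s → q ≠ r → q ≠ s → r ≠ s → False := by
    have hdec : ∀ p q r s : Fin 3, p = q ∨ p = r ∨ p = s ∨ q = r ∨ q = s ∨ r = s := by decide
    intro p q r s h1 h2 h3 h4 h5 h6
    rcases hdec p q r s with h' | h' | h' | h' | h' | h' <;> tauto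
  by_cases h24 : d2 = d4
  · left
    have h1 : fA.1 = fB.1 :=
      fin3 d1 d4 fA.1 fB.1 n14 eA1 eA4 eB1 (by rw [← h24]; exact eB2)
    have h2 : fC.1 = fD.1 :=
      fin3 d3 d4 fC.1 fD.1 (Ne.symm n43) eC3 eC4 eD3 (by rw [← h24]; exact eD2)
    constructor
    · exact Prod.ext h1 (by rw [sA, sB, h1])
    · exact Prod.ext h2 (by rw [sC, sD, h2])
  · have h13 : d1 = d3 := by
      by_contra h13
      exact fin3' d1 d2 d3 d4 n12 h13 n14 n23 h24 (Ne.symm n43)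
    right
    have h1 : fA.1 = fC.1 :=
      fin3 d1 d4 fA.1 fC.1 n14 eA1 eA4 (by rw [h13]; exact eC3) eC4
    have h2 : fB.1 = fD.1 :=
      fin3 d1 d2 fB.1 fD.1 n12 eB1 eB2 (by rw [h13]; exact eD3) eD2
    constructor
    · exact Prod.ext h1 (by rw [sA, sC, h1])
    · exact Prod.ext h2 (by rw [sB, sD, h2])

private lemma block_lemma {P : Polyomino} (φ : ConsMap P) (x y : ℤ)
    (hAB : (((x, y) : Cell), ((x + 1, y) : Cell)) ∈ P.joins)
    (hAC : (((x, y) : Cell), ((x, y + 1) : Cell)) ∈ P.joins)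
    (hBD : (((x + 1, y) : Cell), ((x + 1, y + 1) : Cell)) ∈ P.joins)
    (hCD : (((x, y + 1) : Cell), ((x + 1, y + 1) : Cell)) ∈ P.joins) :
    (φ.cellMap (x, y) = φ.cellMap (x + 1, y) ∧
      φ.cellMap (x, y + 1) = φ.cellMap (x + 1, y + 1)) ∨
    (φ.cellMap (x, y) = φ.cellMap (x, y + 1) ∧
      φ.cellMap (x + 1, y) = φ.cellMap (x + 1, y + 1)) := by
  have hA : ((x, y) : Cell) ∈ P.cells := (P.joins_mem _ hAB).1
  have hB : ((x + 1, y) : Cell) ∈ P.cells := (P.joins_mem _ hAB).2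
  have hC : ((x, y + 1) : Cell) ∈ P.cells := (P.joins_mem _ hAC).2
  have hD : ((x + 1, y + 1) : Cell) ∈ P.cells := (P.joins_mem _ hBD).2
  have e_u1 : φ.vertMap (x, y) (1, 1) = φ.vertMap (x + 1, y) (0, 1) :=
    φ.join_compat _ hAB (1, 1) (0, 1) (by simp [cornerPt])
  have e_u2 : φ.vertMap (x + 1, y) (0, 1) = φ.vertMap (x + 1, y + 1) (0, 0) :=
    φ.join_compat _ hBD (0, 1) (0, 0) (by simp [cornerPt])
  have e_u3 : φ.vertMap (x, y + 1) (1, 0) = φ.vertMap (x + 1, y + 1) (0, 0) :=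
    φ.join_compat _ hCD (1, 0) (0, 0) (by simp [cornerPt])
  have e_w1 : φ.vertMap (x, y) (1, 0) = φ.vertMap (x + 1, y) (0, 0) :=
    φ.join_compat _ hAB (1, 0) (0, 0) (by simp [cornerPt])
  have e_w2 : φ.vertMap (x + 1, y) (1, 1) = φ.vertMap (x + 1, y + 1) (1, 0) :=
    φ.join_compat _ hBD (1, 1) (1, 0) (by simp [cornerPt])
  have e_w3 : φ.vertMap (x, y + 1) (1, 1) = φ.vertMap (x + 1, y + 1) (0, 1) :=
    φ.join_compat _ hCD (1, 1) (0, 1) (by simp [cornerPt])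
  have e_w4 : φ.vertMap (x, y) (0, 1) = φ.vertMap (x, y + 1) (0, 0) :=
    φ.join_compat _ hAC (0, 1) (0, 0) (by simp [cornerPt])
  have uA : φ.vertMap (x, y) (1, 1) = φ.vertMap (x + 1, y + 1) (0, 0) := e_u1.trans e_u2
  -- vdiff facts
  have vA1 : vdiff (φ.vertMap (x + 1, y + 1) (0, 0)) (φ.vertMap (x + 1, y) (0, 0)) = 1 := by
    have h := φ.face_iso _ hA (1, 1) (1, 0)
    rw [uA, e_w1] at h
    exact h.trans (by decide)
  have vA4 : vdiff (φ.vertMap (x + 1, y + 1) (0, 0)) (φ.vertMap (x, y + 1) (0, 0)) = 1 := by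
    have h := φ.face_iso _ hA (1, 1) (0, 1)
    rw [uA, e_w4] at h
    exact h.trans (by decide)
  have vA14 : vdiff (φ.vertMap (x + 1, y) (0, 0)) (φ.vertMap (x, y + 1) (0, 0)) = 2 := by
    have h := φ.face_iso _ hA (1, 0) (0, 1)
    rw [e_w1, e_w4] at h
    exact h.trans (by decide)
  have vB2 : vdiff (φ.vertMap (x + 1, y + 1) (0, 0)) (φ.vertMap (x + 1, y + 1) (1, 0)) = 1 := by
    have h := φ.face_iso _ hB (0, 1) (1, 1)
    rw [e_u2, e_w2] at h
    exact h.trans (by decide)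
  have vB12 : vdiff (φ.vertMap (x + 1, y) (0, 0)) (φ.vertMap (x + 1, y + 1) (1, 0)) = 2 := by
    have h := φ.face_iso _ hB (0, 0) (1, 1)
    rw [e_w2] at h
    exact h.trans (by decide)
  have vC3 : vdiff (φ.vertMap (x + 1, y + 1) (0, 0)) (φ.vertMap (x + 1, y + 1) (0, 1)) = 1 := by
    have h := φ.face_iso _ hC (1, 0) (1, 1)
    rw [e_u3, e_w3] at h
    exact h.trans (by decide)
  have vC34 : vdiff (φ.vertMap (x, y + 1) (0, 0)) (φ.vertMap (x + 1, y + 1) (0, 1)) = 2 := by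
    have h := φ.face_iso _ hC (0, 0) (1, 1)
    rw [e_w3] at h
    exact h.trans (by decide)
  have vD23 : vdiff (φ.vertMap (x + 1, y + 1) (1, 0)) (φ.vertMap (x + 1, y + 1) (0, 1)) = 2 := by
    have h := φ.face_iso _ hD (1, 0) (0, 1)
    exact h.trans (by decide)
  -- second components
  have sA : (φ.cellMap (x, y)).2
      = φ.vertMap (x + 1, y + 1) (0, 0) (φ.cellMap (x, y)).1 := by
    rw [← uA]; exact (φ.vert_on_face _ hA (1, 1)).symm
  have sB : (φ.cellMap (x + 1, y)).2
      = φ.vertMap (x + 1, y + 1) (0, 0) (φ.cellMap (x + 1, y)).1 := by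
    rw [← e_u2]; exact (φ.vert_on_face _ hB (0, 1)).symm
  have sC : (φ.cellMap (x, y + 1)).2
      = φ.vertMap (x + 1, y + 1) (0, 0) (φ.cellMap (x, y + 1)).1 := by
    rw [← e_u3]; exact (φ.vert_on_face _ hC (1, 0)).symm
  have sD : (φ.cellMap (x + 1, y + 1)).2
      = φ.vertMap (x + 1, y + 1) (0, 0) (φ.cellMap (x + 1, y + 1)).1 :=
    (φ.vert_on_face _ hD (0, 0)).symm
  -- agreement at the face normal
  have agA1 : φ.vertMap (x + 1, y + 1) (0, 0) (φ.cellMap (x, y)).1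
      = φ.vertMap (x + 1, y) (0, 0) (φ.cellMap (x, y)).1 := by
    rw [← uA, ← e_w1, φ.vert_on_face _ hA (1, 1), φ.vert_on_face _ hA (1, 0)]
  have agA4 : φ.vertMap (x + 1, y + 1) (0, 0) (φ.cellMap (x, y)).1
      = φ.vertMap (x, y + 1) (0, 0) (φ.cellMap (x, y)).1 := by
    rw [← uA, ← e_w4, φ.vert_on_face _ hA (1, 1), φ.vert_on_face _ hA (0, 1)]
  have agB1 : φ.vertMap (x + 1, y + 1) (0, 0) (φ.cellMap (x + 1, y)).1
      = φ.vertMap (x + 1, y) (0, 0) (φ.cellMap (x + 1, y)).1 := by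
    rw [← e_u2, φ.vert_on_face _ hB (0, 1), φ.vert_on_face _ hB (0, 0)]
  have agB2 : φ.vertMap (x + 1, y + 1) (0, 0) (φ.cellMap (x + 1, y)).1
      = φ.vertMap (x + 1, y + 1) (1, 0) (φ.cellMap (x + 1, y)).1 := by
    rw [← e_u2, ← e_w2, φ.vert_on_face _ hB (0, 1), φ.vert_on_face _ hB (1, 1)]
  have agC3 : φ.vertMap (x + 1, y + 1) (0, 0) (φ.cellMap (x, y + 1)).1
      = φ.vertMap (x + 1, y + 1) (0, 1) (φ.cellMap (x, y + 1)).1 := by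
    rw [← e_u3, ← e_w3, φ.vert_on_face _ hC (1, 0), φ.vert_on_face _ hC (1, 1)]
  have agC4 : φ.vertMap (x + 1, y + 1) (0, 0) (φ.cellMap (x, y + 1)).1
      = φ.vertMap (x, y + 1) (0, 0) (φ.cellMap (x, y + 1)).1 := by
    rw [← e_u3, φ.vert_on_face _ hC (1, 0), φ.vert_on_face _ hC (0, 0)]
  have agD2 : φ.vertMap (x + 1, y + 1) (0, 0) (φ.cellMap (x + 1, y + 1)).1
      = φ.vertMap (x + 1, y + 1) (1, 0) (φ.cellMap (x + 1, y + 1)).1 := by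
    rw [φ.vert_on_face _ hD (0, 0), φ.vert_on_face _ hD (1, 0)]
  have agD3 : φ.vertMap (x + 1, y + 1) (0, 0) (φ.cellMap (x + 1, y + 1)).1
      = φ.vertMap (x + 1, y + 1) (0, 1) (φ.cellMap (x + 1, y + 1)).1 := by
    rw [φ.vert_on_face _ hD (0, 0), φ.vert_on_face _ hD (0, 1)]
  exact square_lemma vA1 vA4 vA14 vB2 vB12 vC3 vC34 vD23 sA sB sC sD
    agA1 agA4 agB1 agB2 agC3 agC4 agD2 agD3

private lemma chain_eq {α : Type _} (f : ℤ → α) (lo hi : ℤ)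
    (h : ∀ t, lo ≤ t → t + 1 < hi → f t = f (t + 1)) :
    ∀ s t, lo ≤ s → s < hi → lo ≤ t → t < hi → f s = f t := by
  have key : ∀ s, lo ≤ s → s < hi → f s = f lo := by
    intro s hs
    refine Int.le_induction (motive := fun s _ => s < hi → f s = f lo) (fun _ => rfl)
      (fun n hn ih hlt => ?_) s hs
    rw [← h n hn hlt]
    exact ih (by omega)
  intro s t hs1 hs2 ht1 ht2
  rw [key s hs1 hs2, key t ht1 ht2]

private lemma propagate_int (Q : ℤ → Prop) (lo hi t0 : ℤ) (h0 : lo ≤ t0) (h0' : t0 < hi)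
    (hQ : Q t0) (hiff : ∀ t, lo ≤ t → t + 1 < hi → (Q t ↔ Q (t + 1))) :
    ∀ t, lo ≤ t → t < hi → Q t := by
  have up : ∀ t, t0 ≤ t → t < hi → Q t := by
    intro t ht
    exact Int.le_induction (motive := fun t _ => t < hi → Q t) (fun _ => hQ)
      (fun n hn ih hlt => (hiff n (by omega) hlt).mp (ih (by omega))) t ht
  have down : ∀ t, t ≤ t0 → lo ≤ t → Q t := by
    intro t ht
    refine Int.le_induction_down (motive := fun t _ => lo ≤ t → Q t) (fun _ => hQ)
      (fun n hn ih hlo => ?_) t ht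
    have hiffn := hiff (n - 1) hlo (by omega)
    have hn1 : n - 1 + 1 = n := by ring
    rw [hn1] at hiffn
    exact hiffn.mpr (ih (by omega))
  intro t ht1 ht2
  rcases le_or_gt t t0 with h | h
  · exact down t h ht1
  · exact up t (by omega) ht2

/-- If `P'` is a rectangular sub-polyomino of `P` (an `a × b` block of cells
of `P`, all present and pairwise joined) whose interior contains no point of the boundary of
`P`, then every consistent mapping from `P` to the cube is constant on each row of `P'` or
constant on each column of `P'`. -/
theorem consMap_constant_on_rows_or_columns (P : Polyomino)
    (x0 y0 : ℤ) (a b : ℕ)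
    (hcells : ∀ c : Cell, x0 ≤ c.1 → c.1 < x0 + a → y0 ≤ c.2 → c.2 < y0 + b → c ∈ P.cells)
    (hjoins : ∀ c d : Cell, x0 ≤ c.1 → c.1 < x0 + a → y0 ≤ c.2 → c.2 < y0 + b →
      x0 ≤ d.1 → d.1 < x0 + a → y0 ≤ d.2 → d.2 < y0 + b → cellAdj c d → (c, d) ∈ P.joins)
    (hint : (flatMap P '' polyBoundary P) ∩
      {x : R2 | (x0 : ℝ) < x 0 ∧ x 0 < x0 + a ∧ (y0 : ℝ) < x 1 ∧ x 1 < y0 + b} = ∅)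
    (φ : ConsMap P) :
    (∀ c d : Cell, x0 ≤ c.1 → c.1 < x0 + a → y0 ≤ c.2 → c.2 < y0 + b →
      x0 ≤ d.1 → d.1 < x0 + a → y0 ≤ d.2 → d.2 < y0 + b →
      c.2 = d.2 → φ.cellMap c = φ.cellMap d) ∨
    (∀ c d : Cell, x0 ≤ c.1 → c.1 < x0 + a → y0 ≤ c.2 → c.2 < y0 + b →
      x0 ≤ d.1 → d.1 < x0 + a → y0 ≤ d.2 → d.2 < y0 + b →
      c.1 = d.1 → φ.cellMap c = φ.cellMap d) := by
  by_cases hb1 : b ≤ 1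
  · right
    intro c d hc1 hc2 hc3 hc4 hd1 hd2 hd3 hd4 hcol
    have hcd : c = d := Prod.ext hcol (by omega)
    rw [hcd]
  by_cases ha1 : a ≤ 1
  · left
    intro c d hc1 hc2 hc3 hc4 hd1 hd2 hd3 hd4 hrow
    have hcd : c = d := Prod.ext (by omega) hrow
    rw [hcd]
  -- every 2×2 block inside the rectangle is fully joined, so `block_lemma` applies
  have hblock : ∀ p q : ℤ, x0 ≤ p → p + 1 < x0 + a → y0 ≤ q → q + 1 < y0 + b →
      ((φ.cellMap (p, q) = φ.cellMap (p + 1, q) ∧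
        φ.cellMap (p, q + 1) = φ.cellMap (p + 1, q + 1)) ∨
       (φ.cellMap (p, q) = φ.cellMap (p, q + 1) ∧
        φ.cellMap (p + 1, q) = φ.cellMap (p + 1, q + 1))) := by
    intro p q h1 h2 h3 h4
    refine block_lemma φ p q ?_ ?_ ?_ ?_
    · refine hjoins (p, q) (p + 1, q) (by omega) (by omega) (by omega) (by omega)
        (by omega) (by omega) (by omega) (by omega) ?_
      show ((p : ℤ) - (p + 1)).natAbs + ((q : ℤ) - q).natAbs = 1
      omega
    · refine hjoins (p, q) (p, q + 1) (by omega) (by omega) (by omega) (by omega)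
        (by omega) (by omega) (by omega) (by omega) ?_
      show ((p : ℤ) - p).natAbs + ((q : ℤ) - (q + 1)).natAbs = 1
      omega
    · refine hjoins (p + 1, q) (p + 1, q + 1) (by omega) (by omega) (by omega) (by omega)
        (by omega) (by omega) (by omega) (by omega) ?_
      show ((p + 1 : ℤ) - (p + 1)).natAbs + ((q : ℤ) - (q + 1)).natAbs = 1
      omega
    · refine hjoins (p, q + 1) (p + 1, q + 1) (by omega) (by omega) (by omega) (by omega)
        (by omega) (by omega) (by omega) (by omega) ?_
      show ((p : ℤ) - (p + 1)).natAbs + ((q + 1 : ℤ) - (q + 1)).natAbs = 1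
      omega
  by_cases Hall : ∀ p q : ℤ, x0 ≤ p → p + 1 < x0 + a → y0 ≤ q → q < y0 + b →
      φ.cellMap (p, q) = φ.cellMap (p + 1, q)
  · left
    intro c d hc1 hc2 hc3 hc4 hd1 hd2 hd3 hd4 hrow
    have key : φ.cellMap (c.1, c.2) = φ.cellMap (d.1, c.2) :=
      chain_eq (fun t => φ.cellMap (t, c.2)) x0 (x0 + a)
        (fun t ht1 ht2 => Hall t c.2 ht1 ht2 hc3 hc4) c.1 d.1 hc1 hc2 hd1 hd2
    calc φ.cellMap c = φ.cellMap (c.1, c.2) := by rw [Prod.mk.eta]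
      _ = φ.cellMap (d.1, c.2) := key
      _ = φ.cellMap d := by rw [hrow, Prod.mk.eta]
  · right
    push_neg at Hall
    obtain ⟨x1, y1, hx1a, hx1b, hy1a, hy1b, hne⟩ := Hall
    have hiffN : ∀ q, y0 ≤ q → q + 1 < y0 + b →
        ((φ.cellMap (x1, q) ≠ φ.cellMap (x1 + 1, q)) ↔
         (φ.cellMap (x1, q + 1) ≠ φ.cellMap (x1 + 1, q + 1))) := by
      intro q h1 h2
      rcases hblock x1 q hx1a hx1b h1 h2 with ⟨e1, e2⟩ | ⟨e1, e2⟩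
      · exact iff_of_false (by simp [e1]) (by simp [e2])
      · rw [e1, e2]
    have Hneq : ∀ q, y0 ≤ q → q < y0 + b → φ.cellMap (x1, q) ≠ φ.cellMap (x1 + 1, q) :=
      propagate_int (fun q => φ.cellMap (x1, q) ≠ φ.cellMap (x1 + 1, q)) y0 (y0 + b)
        y1 hy1a hy1b hne hiffN
    have Vall : ∀ p q : ℤ, x0 ≤ p → p < x0 + a → y0 ≤ q → q + 1 < y0 + b →
        φ.cellMap (p, q) = φ.cellMap (p, q + 1) := by
      intro p q hp1 hp2 hq1 hq2
      have base : φ.cellMap (x1, q) = φ.cellMap (x1, q + 1) := by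
        rcases hblock x1 q hx1a hx1b hq1 hq2 with ⟨e1, _⟩ | ⟨e1, _⟩
        · exact absurd e1 (Hneq q hq1 (by omega))
        · exact e1
      have hiffV : ∀ p, x0 ≤ p → p + 1 < x0 + a →
          ((φ.cellMap (p, q) = φ.cellMap (p, q + 1)) ↔
           (φ.cellMap (p + 1, q) = φ.cellMap (p + 1, q + 1))) := by
        intro p h1 h2
        rcases hblock p q h1 h2 hq1 hq2 with ⟨e1, e2⟩ | ⟨e1, e2⟩
        · rw [e1, e2]
        · exact iff_of_true e1 e2
      exact propagate_int (fun p => φ.cellMap (p, q) = φ.cellMap (p, q + 1)) x0 (x0 + a)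
        x1 hx1a (by omega) base hiffV p hp1 hp2
    intro c d hc1 hc2 hc3 hc4 hd1 hd2 hd3 hd4 hcol
    have key : φ.cellMap (c.1, c.2) = φ.cellMap (c.1, d.2) :=
      chain_eq (fun t => φ.cellMap (c.1, t)) y0 (y0 + b)
        (fun t ht1 ht2 => Vall c.1 t hc1 hc2 ht1 ht2) c.2 d.2 hc3 hc4 hd3 hd4
    calc φ.cellMap c = φ.cellMap (c.1, c.2) := by rw [Prod.mk.eta]
      _ = φ.cellMap (c.1, d.2) := key
      _ = φ.cellMap d := by rw [hcol, Prod.mk.eta]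

end CubeFold
end
end
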